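/- arXiv:1909.12151 — 12 statements merged into one kernel-verified Lean document; each statement's English description precedes it below -/
import Mathlib

section
/- Let G be a group and Λ, Ξ ⊆ G be approximate subgroups. Then Λ² ∩ Ξ² is an approximate subgroup. -/
open Pointwise

def IsApproxSubgroup {G : Type*} [Group G] (Λ : Set G) : Prop :=
  (1 : G) ∈ Λ ∧ Λ⁻¹ = Λ ∧ ∃ F : Set G, F.Finite ∧ Λ * Λ ⊆ F * Λ

def SetCommensurable {G : Type*} [Group G] (A B : Set G) : Prop :=
  ∃ F : Set G, F.Finite ∧ A ⊆ F * B ∧ B ⊆ F * A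

lemma pow4_cover {G : Type*} [Group G] (A F : Set G) (h : A * A ⊆ F * A) :
    A ^ 2 * A ^ 2 ⊆ (F * F * F) * A := by
  have e1 : A ^ 2 * A ^ 2 = ((A * A) * A) * A := by rw [sq, ← mul_assoc]
  rw [e1]
  calc ((A * A) * A) * A ⊆ ((F * A) * A) * A := by gcongr
    _ = (F * (A * A)) * A := by rw [mul_assoc F]
    _ ⊆ (F * (F * A)) * A := by gcongr
    _ = (F * F) * (A * A) := by rw [← mul_assoc, mul_assoc (F * F)]
    _ ⊆ (F * F) * (F * A) := by gcongr
    _ = (F * F * F) * A := by rw [← mul_assoc]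

theorem stmt1 {G : Type*} [Group G] (Λ Ξ : Set G)
    (hΛ : IsApproxSubgroup Λ) (hΞ : IsApproxSubgroup Ξ) :
    IsApproxSubgroup (Λ ^ 2 ∩ Ξ ^ 2) := by
  classical
  obtain ⟨h1Λ, hiΛ, FΛ, hFΛ, hcΛ⟩ := hΛ
  obtain ⟨h1Ξ, hiΞ, FΞ, hFΞ, hcΞ⟩ := hΞ
  refine ⟨⟨?_, ?_⟩, ?_, ?_⟩
  · rw [sq]; exact ⟨1, h1Λ, 1, h1Λ, by simp⟩
  · rw [sq]; exact ⟨1, h1Ξ, 1, h1Ξ, by simp⟩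
  · rw [Set.inter_inv, sq, sq, mul_inv_rev, mul_inv_rev, hiΛ, hiΞ]
  · -- covering
    set pick : G → G → G := fun f e =>
      if h : ((f • Λ) ∩ (e • Ξ)).Nonempty then h.choose else 1 with hpick
    set F₁ := FΛ * FΛ * FΛ with hF₁
    set F₂ := FΞ * FΞ * FΞ with hF₂
    refine ⟨(fun p : G × G => pick p.1 p.2) '' (F₁ ×ˢ F₂),
      ((((hFΛ.mul hFΛ).mul hFΛ).prod ((hFΞ.mul hFΞ).mul hFΞ)).image _), ?_⟩
    intro x hx
    obtain ⟨u, hu, v, hv, rfl⟩ := hx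
    have hxΛ : u * v ∈ F₁ * Λ :=
      pow4_cover Λ FΛ hcΛ (Set.mul_mem_mul hu.1 hv.1)
    have hxΞ : u * v ∈ F₂ * Ξ :=
      pow4_cover Ξ FΞ hcΞ (Set.mul_mem_mul hu.2 hv.2)
    obtain ⟨f, hf, a, ha, hfa⟩ := hxΛ
    obtain ⟨e, he, b, hb, heb⟩ := hxΞ
    have hne : ((f • Λ) ∩ (e • Ξ)).Nonempty :=
      ⟨u * v, ⟨⟨a, ha, hfa⟩, ⟨b, hb, heb⟩⟩⟩
    have hc : pick f e ∈ (f • Λ) ∩ (e • Ξ) := by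
      rw [hpick]; simp only [dif_pos hne]; exact hne.choose_spec
    obtain ⟨⟨a', ha', hfa'⟩, ⟨b', hb', heb'⟩⟩ := hc
    refine ⟨pick f e, ⟨(f, e), ⟨hf, he⟩, rfl⟩, (pick f e)⁻¹ * (u * v), ⟨?_, ?_⟩, by group⟩
    · have : (pick f e)⁻¹ * (u * v) = a'⁻¹ * a := by
        rw [← hfa, ← hfa']; simp [smul_eq_mul, mul_assoc]
      rw [this, sq]
      exact Set.mul_mem_mul (by rw [← hiΛ]; exact Set.inv_mem_inv.mpr ha') ha
    · have : (pick f e)⁻¹ * (u * v) = b'⁻¹ * b := by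
        rw [← heb, ← heb']; simp [smul_eq_mul, mul_assoc]
      rw [this, sq]
      exact Set.mul_mem_mul (by rw [← hiΞ]; exact Set.inv_mem_inv.mpr hb') hb
end

section
/- Let G be a group and Λ, Ξ ⊆ G be approximate subgroups. Then for every k ≥ 2, the set Λ^(2k) ∩ Ξ^(2k) is commensurable to Λ² ∩ Ξ². In particular (Λᵏ ∩ Ξᵏ)_{k≥2} is a family of pairwise commensurable approximate subgroups. -/
open Pointwise

section Aux

variable {G : Type*} [Group G]

lemma my_pow_mono {Λ : Set G} (h1 : (1 : G) ∈ Λ) {m n : ℕ} (h : m ≤ n) :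
    Λ ^ m ⊆ Λ ^ n := by
  induction n, h using Nat.le_induction with
  | base => exact subset_rfl
  | succ n hmn ih =>
    refine ih.trans ?_
    rw [pow_succ]
    exact fun x hx => ⟨x, hx, 1, h1, mul_one x⟩

lemma my_pow_cover {Λ : Set G} (hΛ : IsApproxSubgroup Λ) (n : ℕ) :
    ∃ F : Set G, F.Finite ∧ Λ ^ n ⊆ F * Λ := by
  obtain ⟨h1, hinv, F0, hF0, hF0s⟩ := hΛ
  induction n with
  | zero =>
    refine ⟨{1}, Set.finite_singleton 1, ?_⟩
    intro x hx
    rw [pow_zero] at hx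
    rw [Set.mem_one] at hx
    exact ⟨1, rfl, 1, h1, by simp [hx]⟩
  | succ n ih =>
    obtain ⟨F, hF, hFs⟩ := ih
    refine ⟨F * F0, hF.mul hF0, ?_⟩
    calc Λ ^ (n + 1) = Λ ^ n * Λ := pow_succ Λ n
      _ ⊆ F * Λ * Λ := Set.mul_subset_mul_right hFs
      _ = F * (Λ * Λ) := mul_assoc _ _ _
      _ ⊆ F * (F0 * Λ) := Set.mul_subset_mul_left hF0s
      _ = F * F0 * Λ := (mul_assoc _ _ _).symm

lemma my_main_cover {Λ Ξ : Set G} (hΛ : IsApproxSubgroup Λ) (hΞ : IsApproxSubgroup Ξ)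
    (n : ℕ) :
    ∃ E : Set G, E.Finite ∧ Λ ^ n ∩ Ξ ^ n ⊆ E * (Λ ^ 2 ∩ Ξ ^ 2) := by
  classical
  obtain ⟨F, hF, hFs⟩ := my_pow_cover hΛ n
  obtain ⟨F', hF', hF's⟩ := my_pow_cover hΞ n
  set X := Λ ^ n ∩ Ξ ^ n with hX
  let r : G × G → G := fun p =>
    if h : (X ∩ p.1 • Λ ∩ p.2 • Ξ).Nonempty then h.choose else 1
  refine ⟨r '' (F ×ˢ F'), (hF.prod hF').image r, ?_⟩
  intro y hy
  obtain ⟨f, hf, b, hb, hfb⟩ := Set.mem_mul.mp (hFs hy.1)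
  obtain ⟨f', hf', c, hc, hfc⟩ := Set.mem_mul.mp (hF's hy.2)
  have hne : (X ∩ f • Λ ∩ f' • Ξ).Nonempty :=
    ⟨y, ⟨hy, ⟨b, hb, hfb⟩⟩, ⟨c, hc, hfc⟩⟩
  have hx : r (f, f') ∈ X ∩ f • Λ ∩ f' • Ξ := by
    simp only [r, dif_pos hne]
    exact hne.choose_spec
  obtain ⟨⟨hxX, b₀, hb₀, hfb₀⟩, c₀, hc₀, hfc₀⟩ := hx
  have hΛ2 : (r (f, f'))⁻¹ * y ∈ Λ ^ 2 := by
    have : (r (f, f'))⁻¹ * y = b₀⁻¹ * b := by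
      rw [← hfb₀, ← hfb]; simp only [smul_eq_mul]; group
    rw [this, sq]
    have hb₀' : b₀⁻¹ ∈ Λ := by rw [← hΛ.2.1]; exact Set.inv_mem_inv.mpr hb₀
    exact Set.mul_mem_mul hb₀' hb
  have hΞ2 : (r (f, f'))⁻¹ * y ∈ Ξ ^ 2 := by
    have : (r (f, f'))⁻¹ * y = c₀⁻¹ * c := by
      rw [← hfc₀, ← hfc]; simp only [smul_eq_mul]; group
    rw [this, sq]
    have hc₀' : c₀⁻¹ ∈ Ξ := by rw [← hΞ.2.1]; exact Set.inv_mem_inv.mpr hc₀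
    exact Set.mul_mem_mul hc₀' hc
  refine Set.mem_mul.mpr ⟨r (f, f'), ⟨(f, f'), ⟨hf, hf'⟩, rfl⟩,
    (r (f, f'))⁻¹ * y, ⟨hΛ2, hΞ2⟩, by group⟩

end Aux

theorem stmt2 {G : Type*} [Group G] (Λ Ξ : Set G)
    (hΛ : IsApproxSubgroup Λ) (hΞ : IsApproxSubgroup Ξ) :
    (∀ k : ℕ, 2 ≤ k → SetCommensurable (Λ ^ (2 * k) ∩ Ξ ^ (2 * k)) (Λ ^ 2 ∩ Ξ ^ 2)) ∧
    (∀ k l : ℕ, 2 ≤ k → 2 ≤ l →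
      IsApproxSubgroup (Λ ^ k ∩ Ξ ^ k) ∧
      SetCommensurable (Λ ^ k ∩ Ξ ^ k) (Λ ^ l ∩ Ξ ^ l)) := by
  have h1Λ := hΛ.1
  have hinvΛ := hΛ.2.1
  have h1Ξ := hΞ.1
  have hinvΞ := hΞ.2.1
  have inter_sub : ∀ {m n : ℕ}, m ≤ n → Λ ^ m ∩ Ξ ^ m ⊆ Λ ^ n ∩ Ξ ^ n := by
    intro m n h
    exact Set.inter_subset_inter (my_pow_mono h1Λ h) (my_pow_mono h1Ξ h)
  have triv_cover : ∀ {A B : Set G}, A ⊆ B → ∀ E : Set G, A ⊆ (insert 1 E) * B := by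
    intro A B hAB E x hx
    exact Set.mem_mul.mpr ⟨1, Set.mem_insert 1 E, x, hAB hx, one_mul x⟩
  constructor
  · intro k hk
    obtain ⟨E, hE, hEs⟩ := my_main_cover hΛ hΞ (2 * k)
    refine ⟨insert 1 E, hE.insert 1, ?_, ?_⟩
    · refine hEs.trans ?_
      exact Set.mul_subset_mul_right (Set.subset_insert 1 E)
    · exact triv_cover (inter_sub (by omega)) E
  · intro k l hk hl
    obtain ⟨Ek, hEk, hEks⟩ := my_main_cover hΛ hΞ k
    obtain ⟨El, hEl, hEls⟩ := my_main_cover hΛ hΞ l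
    obtain ⟨E2k, hE2k, hE2ks⟩ := my_main_cover hΛ hΞ (2 * k)
    have h1k : (1 : G) ∈ Λ ^ k ∩ Ξ ^ k :=
      ⟨my_pow_mono h1Λ (Nat.zero_le k) (by rw [pow_zero]; exact Set.mem_one.mpr rfl),
       my_pow_mono h1Ξ (Nat.zero_le k) (by rw [pow_zero]; exact Set.mem_one.mpr rfl)⟩
    refine ⟨⟨h1k, ?_, E2k, hE2k, ?_⟩, ?_⟩
    · rw [Set.inter_inv, ← inv_pow, ← inv_pow, hinvΛ, hinvΞ]
    · calc (Λ ^ k ∩ Ξ ^ k) * (Λ ^ k ∩ Ξ ^ k)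
          ⊆ Λ ^ (2 * k) ∩ Ξ ^ (2 * k) := by
            rintro x ⟨a, ha, b, hb, rfl⟩
            constructor
            · rw [two_mul, pow_add]; exact Set.mul_mem_mul ha.1 hb.1
            · rw [two_mul, pow_add]; exact Set.mul_mem_mul ha.2 hb.2
        _ ⊆ E2k * (Λ ^ 2 ∩ Ξ ^ 2) := hE2ks
        _ ⊆ E2k * (Λ ^ k ∩ Ξ ^ k) := Set.mul_subset_mul_left (inter_sub hk)
    · refine ⟨Ek ∪ El, hEk.union hEl, ?_, ?_⟩
      · calc Λ ^ k ∩ Ξ ^ k ⊆ Ek * (Λ ^ 2 ∩ Ξ ^ 2) := hEks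
          _ ⊆ (Ek ∪ El) * (Λ ^ l ∩ Ξ ^ l) :=
            Set.mul_subset_mul Set.subset_union_left (inter_sub hl)
      · calc Λ ^ l ∩ Ξ ^ l ⊆ El * (Λ ^ 2 ∩ Ξ ^ 2) := hEls
          _ ⊆ (Ek ∪ El) * (Λ ^ k ∩ Ξ ^ k) :=
            Set.mul_subset_mul Set.subset_union_right (inter_sub hk)
end

section
/- Let G be a group, Λ ⊆ G an approximate subgroup, and H ≤ G a subgroup. If Λ ⊆ FH for some finite set F ⊆ G, then Λ² ∩ H is an approximate subgroup commensurable to Λ. -/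
open Pointwise

theorem stmt3 {G : Type*} [Group G] (Λ : Set G) (hΛ : IsApproxSubgroup Λ)
    (H : Subgroup G) (F : Set G) (hF : F.Finite) (hsub : Λ ⊆ F * (H : Set G)) :
    IsApproxSubgroup (Λ ^ 2 ∩ (H : Set G)) ∧
    SetCommensurable (Λ ^ 2 ∩ (H : Set G)) Λ := by
  classical
  obtain ⟨h1, hinv, F₀, hF₀, hmul⟩ := hΛ
  set Ξ : Set G := Λ ^ 2 ∩ (H : Set G) with hΞdef
  have hpow2 : Λ ^ 2 = Λ * Λ := sq Λ
  -- selection of coset representatives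
  have hsel : ∀ f : G, ∃ t : G,
      ((∃ h ∈ (H : Set G), f * h ∈ Λ) → t ∈ Λ ∧ ∃ h ∈ (H : Set G), t = f * h) := by
    intro f
    by_cases hf : ∃ h ∈ (H : Set G), f * h ∈ Λ
    · obtain ⟨h, hh, hmem⟩ := hf
      exact ⟨f * h, fun _ => ⟨hmem, h, hh, rfl⟩⟩
    · exact ⟨1, fun h => absurd h hf⟩
  choose t ht using hsel
  set S := t '' F with hS
  have hSfin : S.Finite := hF.image t
  -- key covering: Λ ⊆ S * Ξ
  have hΛsub : Λ ⊆ S * Ξ := by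
    intro x hx
    obtain ⟨f, hf, h, hh, hfx⟩ := hsub hx
    have hfx' : f * h = x := hfx
    have hex : ∃ h ∈ (H : Set G), f * h ∈ Λ := ⟨h, hh, hfx' ▸ hx⟩
    obtain ⟨htΛ, h', hh', ht'⟩ := ht f hex
    refine ⟨t f, ⟨f, hf, rfl⟩, (t f)⁻¹ * x, ⟨?_, ?_⟩, by group⟩
    · rw [hpow2]
      refine Set.mul_mem_mul ?_ hx
      rw [← hinv]
      simpa using htΛ
    · have hxe : (t f)⁻¹ * x = h'⁻¹ * h := by rw [ht', ← hfx']; group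
      rw [hxe]
      exact mul_mem (inv_mem hh') hh
  -- Λ^3 and Λ^4 covers
  have hΛ3 : Λ * Λ * Λ ⊆ F₀ * F₀ * Λ := by
    calc Λ * Λ * Λ ⊆ F₀ * Λ * Λ := Set.mul_subset_mul_right hmul
      _ = F₀ * (Λ * Λ) := mul_assoc _ _ _
      _ ⊆ F₀ * (F₀ * Λ) := Set.mul_subset_mul_left hmul
      _ = F₀ * F₀ * Λ := (mul_assoc _ _ _).symm
  have hΛ4 : (Λ * Λ) * (Λ * Λ) ⊆ F₀ * F₀ * F₀ * Λ := by
    calc (Λ * Λ) * (Λ * Λ) = Λ * Λ * Λ * Λ := by rw [mul_assoc, mul_assoc, mul_assoc]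
      _ ⊆ F₀ * F₀ * Λ * Λ := Set.mul_subset_mul_right hΛ3
      _ = F₀ * F₀ * (Λ * Λ) := mul_assoc _ _ _
      _ ⊆ F₀ * F₀ * (F₀ * Λ) := Set.mul_subset_mul_left hmul
      _ = F₀ * F₀ * F₀ * Λ := (mul_assoc _ _ _).symm
  constructor
  · refine ⟨⟨?_, one_mem H⟩, ?_, F₀ * F₀ * F₀ * S, ((hF₀.mul hF₀).mul hF₀).mul hSfin, ?_⟩
    · rw [hpow2]
      exact ⟨1, h1, 1, h1, mul_one 1⟩
    · rw [hΞdef, Set.inter_inv, hpow2, mul_inv_rev, hinv]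
      congr 1
      ext x
      simp
    · calc Ξ * Ξ ⊆ (Λ * Λ) * (Λ * Λ) := by
            rw [← hpow2]
            exact Set.mul_subset_mul (Set.inter_subset_left) (Set.inter_subset_left)
        _ ⊆ F₀ * F₀ * F₀ * Λ := hΛ4
        _ ⊆ F₀ * F₀ * F₀ * (S * Ξ) := Set.mul_subset_mul_left hΛsub
        _ = F₀ * F₀ * F₀ * S * Ξ := (mul_assoc _ _ _).symm
  · refine ⟨S ∪ F₀, hSfin.union hF₀, ?_, ?_⟩
    · calc Ξ ⊆ Λ ^ 2 := Set.inter_subset_left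
        _ = Λ * Λ := hpow2
        _ ⊆ F₀ * Λ := hmul
        _ ⊆ (S ∪ F₀) * Λ := Set.mul_subset_mul_right Set.subset_union_right
    · calc Λ ⊆ S * Ξ := hΛsub
        _ ⊆ (S ∪ F₀) * Ξ := Set.mul_subset_mul_right Set.subset_union_left
end

section
/- Let V be a finite-dimensional real vector space and Λ ⊆ V a symmetric subset (Λ = −Λ, 0 ∈ Λ) such that Λ + Λ is compactly commensurable to Λ (i.e. Λ + Λ ⊆ Λ + K for some compact K). Then there exists a vector subspace W ⊆ V that is compactly commensurable to Λ, i.e. Λ ⊆ W + K₁ and W ⊆ Λ + K₂ for compact sets K₁, K₂. -/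
open Pointwise Metric

namespace Schreiber4

variable {V : Type*} [NormedAddCommGroup V] [NormedSpace ℝ V]

section basic
variable (Λ : Set V) (C : ℝ)

/-- distance to Λ -/
noncomputable def dd (x : V) : ℝ := Metric.infDist x Λ

variable {Λ C}

lemma dd_nonneg (x : V) : 0 ≤ dd Λ x := Metric.infDist_nonneg

lemma dd_mem {x : V} (hx : x ∈ Λ) : dd Λ x = 0 := Metric.infDist_zero_of_mem hx

lemma dd_le_norm (h0 : (0:V) ∈ Λ) (x : V) : dd Λ x ≤ ‖x‖ := by
  have := Metric.infDist_le_dist_of_mem (x := x) h0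
  simpa [dd, dist_eq_norm] using this

lemma dd_lip (x y : V) : dd Λ x ≤ dd Λ y + ‖x - y‖ := by
  have := Metric.infDist_le_infDist_add_dist (x := x) (y := y) (s := Λ)
  simpa [dd, dist_eq_norm] using this

lemma dd_even (hsym : -Λ = Λ) (x : V) : dd Λ (-x) = dd Λ x := by
  have : dd Λ (-x) = Metric.infDist x (-Λ) := by
    rw [dd, ← Metric.infDist_image (Φ := fun v : V => -v) isometry_neg (x := x) (t := -Λ)]
    simp [Set.image_neg_eq_neg]
  rw [this, hsym, dd]

lemma dd_add (h0 : (0:V) ∈ Λ) (hC : ∀ a ∈ Λ, ∀ b ∈ Λ, ∃ z ∈ Λ, ‖a + b - z‖ ≤ C)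
    (x y : V) : dd Λ (x + y) ≤ dd Λ x + dd Λ y + C := by
  have hne : Λ.Nonempty := ⟨0, h0⟩
  refine le_of_forall_pos_le_add fun ε hε => ?_
  obtain ⟨a, ha, hax⟩ := (Metric.infDist_lt_iff hne).1
    (show Metric.infDist x Λ < dd Λ x + ε/2 by simp [dd]; linarith)
  obtain ⟨b, hb, hby⟩ := (Metric.infDist_lt_iff hne).1
    (show Metric.infDist y Λ < dd Λ y + ε/2 by simp [dd]; linarith)
  obtain ⟨z, hz, hzn⟩ := hC a ha b hb
  have h1 : dd Λ (x + y) ≤ ‖x + y - z‖ := by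
    have := Metric.infDist_le_dist_of_mem (x := x + y) hz
    simpa [dd, dist_eq_norm] using this
  have h2 : ‖x + y - z‖ ≤ ‖x - a‖ + ‖y - b‖ + ‖a + b - z‖ := by
    have : x + y - z = (x - a) + (y - b) + (a + b - z) := by abel
    rw [this]
    exact (norm_add_le _ _).trans (by gcongr; exact norm_add_le _ _)
  rw [dist_eq_norm] at hax hby
  linarith

lemma dd_nsmul (h0 : (0:V) ∈ Λ) (hC : ∀ a ∈ Λ, ∀ b ∈ Λ, ∃ z ∈ Λ, ‖a + b - z‖ ≤ C)
    (hC0 : 0 ≤ C) (x : V) : ∀ n : ℕ, dd Λ ((n:ℝ) • x) ≤ n * (dd Λ x + C) := by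
  intro n
  induction n with
  | zero => simp [dd_mem h0]
  | succ n ih =>
      have : ((n+1 : ℕ) : ℝ) • x = (n:ℝ) • x + x := by
        push_cast; rw [add_smul, one_smul]
      rw [this]
      have := dd_add h0 hC ((n:ℝ) • x) x
      push_cast
      have hd := dd_nonneg (Λ := Λ) x
      nlinarith

lemma dd_nsmul' (h0 : (0:V) ∈ Λ) (hC : ∀ a ∈ Λ, ∀ b ∈ Λ, ∃ z ∈ Λ, ‖a + b - z‖ ≤ C)
    (hC0 : 0 ≤ C) (x : V) : ∀ n : ℕ, 1 ≤ n → dd Λ ((n:ℝ) • x) + C ≤ n * (dd Λ x + C) := by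
  intro n hn
  induction n with
  | zero => omega
  | succ n ih =>
      rcases Nat.eq_or_lt_of_le hn with h1 | h1
      · simp [← h1]
      · have hn' : 1 ≤ n := by omega
        have : ((n+1 : ℕ) : ℝ) • x = (n:ℝ) • x + x := by
          push_cast; rw [add_smul, one_smul]
        rw [this]
        have h2 := dd_add h0 hC ((n:ℝ) • x) x
        have h3 := ih hn'
        push_cast
        linarith

end basic

section delta
variable (Λ : Set V) (C : ℝ)

noncomputable def delta (x : V) : ℝ := ⨅ n : ℕ+, (dd Λ (((n:ℕ):ℝ) • x) + C) / (n:ℕ)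

variable {Λ C}

lemma delta_bdd (hC0 : 0 ≤ C) (x : V) :
    BddBelow (Set.range fun n : ℕ+ => (dd Λ (((n:ℕ):ℝ) • x) + C) / (n:ℕ)) := by
  refine ⟨0, fun y hy => ?_⟩
  obtain ⟨n, rfl⟩ := hy
  have := dd_nonneg (Λ := Λ) (((n:ℕ):ℝ) • x)
  positivity

lemma delta_nonneg (hC0 : 0 ≤ C) (x : V) : 0 ≤ delta Λ C x := by
  refine Real.iInf_nonneg fun n => ?_
  have := dd_nonneg (Λ := Λ) (((n:ℕ):ℝ) • x)
  positivity

lemma delta_le (hC0 : 0 ≤ C) (x : V) (n : ℕ+) :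
    delta Λ C x ≤ (dd Λ (((n:ℕ):ℝ) • x) + C) / (n:ℕ) :=
  ciInf_le (delta_bdd hC0 x) n

lemma delta_le_C (hC0 : 0 ≤ C) {x : V} (hx : x ∈ Λ) : delta Λ C x ≤ C := by
  have := delta_le (Λ := Λ) hC0 x 1
  simpa [dd_mem hx] using this

lemma exists_of_delta_lt (hC0 : 0 ≤ C) {x : V} {a : ℝ} (h : delta Λ C x < a) :
    ∃ n : ℕ+, (dd Λ (((n:ℕ):ℝ) • x) + C) / (n:ℕ) < a :=
  exists_lt_of_ciInf_lt h

lemma delta_zero (h0 : (0:V) ∈ Λ) (hC0 : 0 ≤ C) : delta Λ C 0 = 0 := by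
  refine le_antisymm ?_ (delta_nonneg hC0 0)
  refine le_of_forall_pos_le_add fun ε hε => ?_
  obtain ⟨n, hn⟩ := exists_nat_gt (C / ε)
  have h1 := delta_le (Λ := Λ) hC0 0 ⟨n+1, by omega⟩
  simp only [PNat.mk_coe, smul_zero, dd_mem h0, zero_add] at h1
  have hnp : (0:ℝ) < (n:ℝ)+1 := by positivity
  have : C / ((n:ℝ)+1) ≤ ε := by
    rw [div_le_iff₀ hnp]
    rw [div_lt_iff₀ hε] at hn
    nlinarith
  push_cast at h1
  linarith

lemma delta_even (hsym : -Λ = Λ) (x : V) : delta Λ C (-x) = delta Λ C x := by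
  unfold delta
  congr 1
  ext n
  rw [smul_neg, dd_even hsym]

lemma delta_add (h0 : (0:V) ∈ Λ) (hC : ∀ a ∈ Λ, ∀ b ∈ Λ, ∃ z ∈ Λ, ‖a + b - z‖ ≤ C)
    (hC0 : 0 ≤ C) (x y : V) : delta Λ C (x + y) ≤ delta Λ C x + delta Λ C y := by
  refine le_of_forall_pos_le_add fun ε hε => ?_
  obtain ⟨n, hn⟩ := exists_of_delta_lt hC0 (show delta Λ C x < delta Λ C x + ε/2 by linarith)
  obtain ⟨m, hm⟩ := exists_of_delta_lt hC0 (show delta Λ C y < delta Λ C y + ε/2 by linarith)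
  have key : delta Λ C (x + y) ≤ (dd Λ (((n:ℕ):ℝ) • x) + C) / (n:ℕ) +
      (dd Λ (((m:ℕ):ℝ) • y) + C) / (m:ℕ) := by
    have h1 := delta_le (Λ := Λ) hC0 (x + y) (n * m)
    have hcast : (((n*m : ℕ+):ℕ):ℝ) = ((n:ℕ):ℝ) * ((m:ℕ):ℝ) := by push_cast; ring
    rw [hcast] at h1
    have e1 : (((n:ℕ):ℝ) * ((m:ℕ):ℝ)) • (x + y)
        = ((m:ℕ):ℝ) • (((n:ℕ):ℝ) • x) + ((n:ℕ):ℝ) • (((m:ℕ):ℝ) • y) := by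
      rw [smul_add, smul_smul, smul_smul, mul_comm]
    rw [e1] at h1
    have h2 := dd_add h0 hC (((m:ℕ):ℝ) • (((n:ℕ):ℝ) • x)) (((n:ℕ):ℝ) • (((m:ℕ):ℝ) • y))
    have h3 := dd_nsmul' h0 hC hC0 (((n:ℕ):ℝ) • x) (m:ℕ) m.property
    have h4 := dd_nsmul' h0 hC hC0 (((m:ℕ):ℝ) • y) (n:ℕ) n.property
    have hnpos : (0:ℝ) < ((n:ℕ):ℝ) := by exact_mod_cast n.property
    have hmpos : (0:ℝ) < ((m:ℕ):ℝ) := by exact_mod_cast m.property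
    refine h1.trans ?_
    rw [div_add_div _ _ (ne_of_gt hnpos) (ne_of_gt hmpos)]
    rw [div_le_div_iff₀ (by positivity) (by positivity)]
    nlinarith [dd_nonneg (Λ := Λ) (((m:ℕ):ℝ) • (((n:ℕ):ℝ) • x) + ((n:ℕ):ℝ) • (((m:ℕ):ℝ) • y))]
  linarith


lemma delta_lip (hC0 : 0 ≤ C) (x y : V) : delta Λ C x ≤ delta Λ C y + ‖x - y‖ := by
  refine le_of_forall_pos_le_add fun ε hε => ?_
  obtain ⟨n, hn⟩ := exists_of_delta_lt hC0 (show delta Λ C y < delta Λ C y + ε by linarith)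
  have hnpos : (0:ℝ) < ((n:ℕ):ℝ) := by exact_mod_cast n.property
  have h1 := delta_le (Λ := Λ) hC0 x n
  have h2 : dd Λ (((n:ℕ):ℝ) • x) ≤ dd Λ (((n:ℕ):ℝ) • y) + ((n:ℕ):ℝ) * ‖x - y‖ := by
    have := dd_lip (Λ := Λ) (((n:ℕ):ℝ) • x) (((n:ℕ):ℝ) • y)
    rw [← smul_sub, norm_smul] at this
    simpa [abs_of_pos hnpos] using this
  have h3 : (dd Λ (((n:ℕ):ℝ) • x) + C) / ((n:ℕ):ℝ)
      ≤ (dd Λ (((n:ℕ):ℝ) • y) + C) / ((n:ℕ):ℝ) + ‖x - y‖ := by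
    rw [div_le_iff₀ hnpos, add_mul, div_mul_cancel₀ _ (ne_of_gt hnpos)]
    linarith
  calc delta Λ C x ≤ _ := h1
    _ ≤ _ := h3
    _ ≤ (delta Λ C y + ε) + ‖x - y‖ := by linarith
    _ = delta Λ C y + ‖x - y‖ + ε := by ring

lemma delta_smul_le (h0 : (0:V) ∈ Λ) (hC : ∀ a ∈ Λ, ∀ b ∈ Λ, ∃ z ∈ Λ, ‖a + b - z‖ ≤ C)
    (hC0 : 0 ≤ C) {t : ℝ} (ht : 0 < t) (x : V) :
    delta Λ C (t • x) ≤ t * delta Λ C x := by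
  refine le_of_forall_pos_le_add fun ε hε => ?_
  have hfrac : 0 < ε / (2*t) := by positivity
  set a := delta Λ C x + ε / (2*t) with ha
  have hapos : 0 < a := by
    have hd1 := delta_nonneg (Λ := Λ) hC0 x
    rw [ha]; linarith
  obtain ⟨n, hn⟩ := exists_of_delta_lt hC0 (show delta Λ C x < a by rw [ha]; linarith)
  have hnpos : (0:ℝ) < ((n:ℕ):ℝ) := by exact_mod_cast n.property
  rw [div_lt_iff₀ hnpos] at hn
  -- choose m large
  obtain ⟨m₀, hm₀⟩ := exists_nat_gt ((((n:ℕ):ℝ) * ‖x‖ + 2*C) / (ε/2))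
  set m : ℕ+ := ⟨m₀ + 1, Nat.succ_pos _⟩ with hm
  have hmpos : (0:ℝ) < ((m:ℕ):ℝ) := by exact_mod_cast m.property
  have hmge : (((n:ℕ):ℝ) * ‖x‖ + 2*C) / (ε/2) < ((m:ℕ):ℝ) := by
    have hnat : (m:ℕ) = m₀ + 1 := rfl
    have hcast : ((m:ℕ):ℝ) = (m₀:ℝ) + 1 := by rw [hnat]; push_cast; ring
    rw [hcast]; linarith
  have hmain : (((n:ℕ):ℝ) * ‖x‖ + 2*C) / ((m:ℕ):ℝ) ≤ ε/2 := by
    rw [div_le_iff₀ hmpos]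
    rw [div_lt_iff₀ (by positivity : (0:ℝ) < ε/2)] at hmge
    linarith
  -- the division argument
  set s : ℝ := ((m:ℕ):ℝ) * t with hs
  have hspos : 0 < s := by positivity
  set q : ℕ := ⌊s / ((n:ℕ):ℝ)⌋₊ with hq
  have hq1 : (q:ℝ) * ((n:ℕ):ℝ) ≤ s := by
    rw [hq]
    have := Nat.floor_le (by positivity : (0:ℝ) ≤ s / ((n:ℕ):ℝ))
    calc (⌊s / ((n:ℕ):ℝ)⌋₊:ℝ) * ((n:ℕ):ℝ) ≤ (s / ((n:ℕ):ℝ)) * ((n:ℕ):ℝ) := by gcongr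
      _ = s := by field_simp
  have hq2 : s - (q:ℝ) * ((n:ℕ):ℝ) < ((n:ℕ):ℝ) := by
    have := Nat.lt_floor_add_one (s / ((n:ℕ):ℝ))
    rw [hq]
    have h' : s / ((n:ℕ):ℝ) < (⌊s / ((n:ℕ):ℝ)⌋₊:ℝ) + 1 := this
    rw [div_lt_iff₀ hnpos] at h'
    nlinarith
  have edecomp : s • x = ((q:ℝ) * ((n:ℕ):ℝ)) • x + (s - (q:ℝ)*((n:ℕ):ℝ)) • x := by
    rw [← add_smul]; ring_nf
  have hd1 : dd Λ (((q:ℝ) * ((n:ℕ):ℝ)) • x) ≤ (q:ℝ) * (dd Λ (((n:ℕ):ℝ) • x) + C) := by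
    have := dd_nsmul h0 hC hC0 (((n:ℕ):ℝ) • x) q
    rw [smul_smul] at this
    exact this
  have hd2 : dd Λ ((s - (q:ℝ)*((n:ℕ):ℝ)) • x) ≤ ((n:ℕ):ℝ) * ‖x‖ := by
    refine (dd_le_norm h0 _).trans ?_
    rw [norm_smul, Real.norm_eq_abs, abs_of_nonneg (by linarith)]
    have hx0 : (0:ℝ) ≤ ‖x‖ := norm_nonneg x
    nlinarith
  have hd3 : dd Λ (s • x) ≤ (q:ℝ) * (dd Λ (((n:ℕ):ℝ) • x) + C) + ((n:ℕ):ℝ) * ‖x‖ + C := by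
    rw [edecomp]
    have := dd_add h0 hC (((q:ℝ) * ((n:ℕ):ℝ)) • x) ((s - (q:ℝ)*((n:ℕ):ℝ)) • x)
    linarith
  have hd4 : dd Λ (s • x) ≤ s * a + ((n:ℕ):ℝ) * ‖x‖ + C := by
    have hqa : (q:ℝ) * (dd Λ (((n:ℕ):ℝ) • x) + C) ≤ s * a := by
      have hdd := dd_nonneg (Λ := Λ) (((n:ℕ):ℝ) • x)
      have hqn : (0:ℝ) ≤ (q:ℝ) := Nat.cast_nonneg q
      calc (q:ℝ) * (dd Λ (((n:ℕ):ℝ) • x) + C) ≤ (q:ℝ) * (((n:ℕ):ℝ) * a) := by nlinarith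
        _ = ((q:ℝ) * ((n:ℕ):ℝ)) * a := by ring
        _ ≤ s * a := by nlinarith
    linarith
  have hfin := delta_le (Λ := Λ) hC0 (t • x) m
  have hsmul : ((m:ℕ):ℝ) • (t • x) = s • x := by rw [smul_smul, hs]
  rw [hsmul] at hfin
  have hkey : (dd Λ (s • x) + C) / ((m:ℕ):ℝ) ≤ t * a + ε/2 := by
    have hmain' : ((n:ℕ):ℝ) * ‖x‖ + 2*C ≤ ε/2 * ((m:ℕ):ℝ) := by
      rw [div_le_iff₀ hmpos] at hmain; linarith
    have hsa : s * a = t * a * ((m:ℕ):ℝ) := by rw [hs]; ring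
    rw [div_le_iff₀ hmpos]
    calc dd Λ (s • x) + C ≤ s * a + (((n:ℕ):ℝ) * ‖x‖ + 2*C) := by linarith
      _ = t * a * ((m:ℕ):ℝ) + (((n:ℕ):ℝ) * ‖x‖ + 2*C) := by rw [hsa]
      _ ≤ t * a * ((m:ℕ):ℝ) + ε/2 * ((m:ℕ):ℝ) := by linarith
      _ = (t * a + ε/2) * ((m:ℕ):ℝ) := by ring
  have hta : t * a = t * delta Λ C x + ε/2 := by
    rw [ha, mul_add]
    have h2 : t * (ε / (2*t)) = ε/2 := by
      field_simp
    rw [h2]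
  linarith

lemma delta_cont (hC0 : 0 ≤ C) : Continuous (delta Λ C) := by
  have : LipschitzWith 1 (delta Λ C) := by
    refine LipschitzWith.of_dist_le_mul fun x y => ?_
    rw [NNReal.coe_one, one_mul, Real.dist_eq, abs_le, dist_eq_norm]
    constructor
    · have := delta_lip (Λ := Λ) (C := C) hC0 y x
      rw [show ‖y - x‖ = ‖x - y‖ from norm_sub_rev y x] at this
      linarith
    · have := delta_lip (Λ := Λ) (C := C) hC0 x y
      linarith
  exact this.continuous


lemma sublinear [FiniteDimensional ℝ V] {Λ : Set V} {C : ℝ}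
    (h0 : (0:V) ∈ Λ) (hC : ∀ a ∈ Λ, ∀ b ∈ Λ, ∃ z ∈ Λ, ‖a + b - z‖ ≤ C)
    (hC0 : 0 ≤ C) {ε : ℝ} (hε : 0 < ε) :
    ∃ M : ℝ, 0 ≤ M ∧ ∀ x : V, delta Λ C x = 0 → dd Λ x ≤ ε * ‖x‖ + M := by
  classical
  set ε' := ε/2 with hε'
  have hε'pos : 0 < ε' := by positivity
  set S : Set V := {v : V | delta Λ C v = 0} ∩ Metric.sphere (0:V) 1 with hS
  have hSclosed : IsClosed S :=
    (isClosed_eq (delta_cont hC0) continuous_const).inter Metric.isClosed_sphere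
  have hSsub : S ⊆ Metric.closedBall (0:V) 1 := fun v hv =>
    Metric.sphere_subset_closedBall hv.2
  have hScomp : IsCompact S :=
    (isCompact_closedBall (0:V) 1).of_isClosed_subset hSclosed hSsub
  -- for each direction, a good scale
  have hchoice : ∀ v : S, ∃ n : ℕ+, dd Λ (((n:ℕ):ℝ) • (v:V)) + C < ε' * ((n:ℕ):ℝ) := by
    rintro ⟨v, hv0, hvs⟩
    have : delta Λ C v < ε' := by rw [hv0]; exact hε'pos
    obtain ⟨n, hn⟩ := exists_of_delta_lt hC0 this
    refine ⟨n, ?_⟩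
    have hnpos : (0:ℝ) < ((n:ℕ):ℝ) := by exact_mod_cast n.property
    rw [div_lt_iff₀ hnpos] at hn
    simpa [mul_comm] using hn
  choose g hg using hchoice
  -- finite subcover
  have hcover : S ⊆ ⋃ v : S, Metric.ball (v:V) ε' := fun v hv =>
    Set.mem_iUnion.2 ⟨⟨v, hv⟩, Metric.mem_ball_self hε'pos⟩
  obtain ⟨t, ht⟩ := hScomp.elim_finite_subcover (fun v : S => Metric.ball (v:V) ε')
    (fun _ => Metric.isOpen_ball) hcover
  set M : ℝ := ∑ v ∈ t, (((g v : ℕ):ℝ) + C) with hM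
  have hMterm : ∀ v ∈ t, ((g v : ℕ):ℝ) + C ≤ M := by
    intro v hv
    rw [hM]
    refine Finset.single_le_sum (f := fun i => ((g i : ℕ):ℝ) + C) (fun i _ => ?_) hv
    have : (0:ℝ) < ((g i : ℕ):ℝ) := by exact_mod_cast (g i).property
    linarith
  have hM0 : 0 ≤ M := by
    rw [hM]
    refine Finset.sum_nonneg fun i _ => ?_
    have : (0:ℝ) < ((g i : ℕ):ℝ) := by exact_mod_cast (g i).property
    linarith
  refine ⟨M, hM0, fun x hx => ?_⟩
  by_cases hx0 : x = 0
  · rw [hx0]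
    simp [dd_mem h0, hM0]
  · have hxn : (0:ℝ) < ‖x‖ := norm_pos_iff.2 hx0
    set u : V := ‖x‖⁻¹ • x with hu
    have hu1 : ‖u‖ = 1 := by
      rw [hu, norm_smul, Real.norm_eq_abs, abs_of_pos (by positivity)]
      field_simp
    have hud : delta Λ C u = 0 := by
      refine le_antisymm ?_ (delta_nonneg hC0 u)
      have := delta_smul_le h0 hC hC0 (t := ‖x‖⁻¹) (by positivity) x
      rw [hx, mul_zero] at this
      exact hu ▸ this
    have huS : u ∈ S := ⟨hud, by simpa using hu1⟩
    obtain ⟨v, hvt, hv⟩ := Set.mem_iUnion₂.1 (ht huS)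
    have hvball : ‖u - (v:V)‖ < ε' := by
      have := Metric.mem_ball.1 hv
      rwa [dist_eq_norm] at this
    set n : ℕ+ := g v with hn
    have hngood := hg v
    have hnpos : (0:ℝ) < ((n:ℕ):ℝ) := by exact_mod_cast n.property
    set s : ℝ := ‖x‖ with hs
    set q : ℕ := ⌊s / ((n:ℕ):ℝ)⌋₊ with hq
    have hq1 : (q:ℝ) * ((n:ℕ):ℝ) ≤ s := by
      have h' := Nat.floor_le (by positivity : (0:ℝ) ≤ s / ((n:ℕ):ℝ))
      calc (q:ℝ) * ((n:ℕ):ℝ) ≤ (s / ((n:ℕ):ℝ)) * ((n:ℕ):ℝ) := by rw [hq]; gcongr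
        _ = s := by field_simp
    have hq2 : s - (q:ℝ) * ((n:ℕ):ℝ) < ((n:ℕ):ℝ) := by
      have h' : s / ((n:ℕ):ℝ) < (q:ℝ) + 1 := by rw [hq]; exact Nat.lt_floor_add_one _
      rw [div_lt_iff₀ hnpos] at h'
      nlinarith
    have hvnorm : ‖(v:V)‖ = 1 := by
      have := v.2.2
      simpa using this
    -- x = s • u ; compare with s • v
    have hxu : x = s • u := by
      rw [hu, hs, smul_smul]
      field_simp
      rw [one_smul]
    have step1 : dd Λ x ≤ dd Λ (s • (v:V)) + ε' * s := by
      have hlip := dd_lip (Λ := Λ) x (s • (v:V))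
      have : ‖x - s • (v:V)‖ ≤ ε' * s := by
        rw [hxu, ← smul_sub, norm_smul, Real.norm_eq_abs, abs_of_pos hxn]
        calc s * ‖u - (v:V)‖ ≤ s * ε' := by nlinarith
          _ = ε' * s := by ring
      linarith
    have edecomp : s • (v:V) = ((q:ℝ) * ((n:ℕ):ℝ)) • (v:V)
        + (s - (q:ℝ)*((n:ℕ):ℝ)) • (v:V) := by
      rw [← add_smul]; ring_nf
    have hd1 : dd Λ (((q:ℝ) * ((n:ℕ):ℝ)) • (v:V)) ≤ (q:ℝ) * (dd Λ (((n:ℕ):ℝ) • (v:V)) + C) := by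
      have := dd_nsmul h0 hC hC0 (((n:ℕ):ℝ) • (v:V)) q
      rw [smul_smul] at this
      exact this
    have hd1' : dd Λ (((q:ℝ) * ((n:ℕ):ℝ)) • (v:V)) ≤ ε' * s := by
      refine hd1.trans ?_
      have hqn : (0:ℝ) ≤ (q:ℝ) := Nat.cast_nonneg q
      calc (q:ℝ) * (dd Λ (((n:ℕ):ℝ) • (v:V)) + C) ≤ (q:ℝ) * (ε' * ((n:ℕ):ℝ)) := by
            have := hngood; nlinarith
        _ = ε' * ((q:ℝ) * ((n:ℕ):ℝ)) := by ring
        _ ≤ ε' * s := by nlinarith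
    have hd2 : dd Λ ((s - (q:ℝ)*((n:ℕ):ℝ)) • (v:V)) ≤ ((n:ℕ):ℝ) := by
      refine (dd_le_norm h0 _).trans ?_
      rw [norm_smul, Real.norm_eq_abs, abs_of_nonneg (by linarith), hvnorm]
      linarith
    have step2 : dd Λ (s • (v:V)) ≤ ε' * s + ((n:ℕ):ℝ) + C := by
      rw [edecomp]
      have := dd_add h0 hC (((q:ℝ) * ((n:ℕ):ℝ)) • (v:V)) ((s - (q:ℝ)*((n:ℕ):ℝ)) • (v:V))
      linarith
    have hnM : ((n:ℕ):ℝ) + C ≤ M := hMterm v hvt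
    have : dd Λ x ≤ ε' * s + ((n:ℕ):ℝ) + C + ε' * s := by linarith
    calc dd Λ x ≤ ε' * s + ((n:ℕ):ℝ) + C + ε' * s := this
      _ = ε * ‖x‖ + (((n:ℕ):ℝ) + C) := by rw [hε', hs]; ring
      _ ≤ ε * ‖x‖ + M := by linarith

end delta

end Schreiber4


open Pointwise

theorem stmt4 {V : Type*} [NormedAddCommGroup V] [NormedSpace ℝ V]
    [FiniteDimensional ℝ V] (Λ : Set V) (h0 : (0 : V) ∈ Λ) (hsym : -Λ = Λ)
    (hcc : ∃ K : Set V, IsCompact K ∧ Λ + Λ ⊆ Λ + K) :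
    ∃ (W : Submodule ℝ V) (K₁ K₂ : Set V), IsCompact K₁ ∧ IsCompact K₂ ∧
      Λ ⊆ (W : Set V) + K₁ ∧ (W : Set V) ⊆ Λ + K₂ := by
  classical
  obtain ⟨K, hK, hKsub⟩ := hcc
  obtain ⟨C₀, hC₀⟩ := isBounded_iff_forall_norm_le.1 hK.isBounded
  set C := max C₀ 0 with hCdef
  have hC0 : 0 ≤ C := le_max_right _ _
  have hC : ∀ a ∈ Λ, ∀ b ∈ Λ, ∃ z ∈ Λ, ‖a + b - z‖ ≤ C := by
    intro a ha b hb
    have hab : a + b ∈ Λ + K := hKsub (Set.add_mem_add ha hb)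
    obtain ⟨z, hz, k, hk, hzk⟩ := Set.mem_add.1 hab
    refine ⟨z, hz, ?_⟩
    have he : a + b - z = k := by rw [← hzk]; abel
    rw [he]
    exact (hC₀ k hk).trans (le_max_left _ _)
  have hne : Λ.Nonempty := ⟨0, h0⟩
  -- the subspace: kernel of the asymptotic seminorm
  set W : Submodule ℝ V :=
    { carrier := {x | Schreiber4.delta Λ C x = 0}
      zero_mem' := Schreiber4.delta_zero h0 hC0
      add_mem' := by
        intro x y hx hy
        simp only [Set.mem_setOf_eq] at hx hy ⊢
        refine le_antisymm ?_ (Schreiber4.delta_nonneg hC0 _)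
        have h := Schreiber4.delta_add h0 hC hC0 x y
        rw [hx, hy] at h; linarith
      smul_mem' := by
        intro c x hx
        simp only [Set.mem_setOf_eq] at hx ⊢
        rcases lt_trichotomy c 0 with hc | hc | hc
        · have h1 : c • x = -((-c) • x) := by rw [neg_smul, neg_neg]
          rw [h1, Schreiber4.delta_even hsym]
          refine le_antisymm ?_ (Schreiber4.delta_nonneg hC0 _)
          have h := Schreiber4.delta_smul_le h0 hC hC0 (t := -c) (by linarith) x
          rw [hx, mul_zero] at h; exact h
        · rw [hc, zero_smul]; exact Schreiber4.delta_zero h0 hC0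
        · refine le_antisymm ?_ (Schreiber4.delta_nonneg hC0 _)
          have h := Schreiber4.delta_smul_le h0 hC hC0 (t := c) hc x
          rw [hx, mul_zero] at h; exact h } with hWdef
  have memW : ∀ x : V, x ∈ W ↔ Schreiber4.delta Λ C x = 0 := fun x => Iff.rfl
  -- Part (B): Λ is within bounded distance of W
  obtain ⟨ρ, hρ0, hB⟩ : ∃ ρ : ℝ, 0 ≤ ρ ∧ ∀ l ∈ Λ, ∃ w ∈ W, ‖l - w‖ ≤ ρ := by
    obtain ⟨U, hU⟩ := Submodule.exists_isCompl W
    by_cases hUbot : ∀ u ∈ U, u = (0:V)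
    · refine ⟨0, le_refl 0, fun l hl => ?_⟩
      have hmem : l ∈ W ⊔ U := by rw [hU.sup_eq_top]; trivial
      obtain ⟨w, hw, u, hu, hsum⟩ := Submodule.mem_sup.1 hmem
      refine ⟨w, hw, ?_⟩
      have : l - w = u := by rw [← hsum]; abel
      rw [this, hUbot u hu]
      simp
    · push_neg at hUbot
      obtain ⟨u₁, hu₁U, hu₁0⟩ := hUbot
      set SU : Set V := (U : Set V) ∩ Metric.sphere (0:V) 1 with hSU
      have hsphere : ∀ u : V, u ≠ 0 → ‖(‖u‖⁻¹ • u)‖ = 1 := by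
        intro u hu
        rw [norm_smul, Real.norm_eq_abs, abs_inv, abs_norm]
        exact inv_mul_cancel₀ (norm_ne_zero_iff.2 hu)
      have hSUne : SU.Nonempty := by
        refine ⟨‖u₁‖⁻¹ • u₁, U.smul_mem _ hu₁U, ?_⟩
        simp only [Metric.mem_sphere, dist_zero_right]
        exact hsphere u₁ hu₁0
      have hSUclosed : IsClosed SU :=
        (Submodule.closed_of_finiteDimensional U).inter Metric.isClosed_sphere
      have hSUcomp : IsCompact SU :=
        (isCompact_closedBall (0:V) 1).of_isClosed_subset hSUclosed
          (fun v hv => Metric.sphere_subset_closedBall hv.2)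
      obtain ⟨u₀, hu₀SU, hu₀min⟩ :=
        hSUcomp.exists_isMinOn hSUne ((Schreiber4.delta_cont hC0).continuousOn)
      set m := Schreiber4.delta Λ C u₀ with hm
      have hm0 : 0 < m := by
        rcases (Schreiber4.delta_nonneg hC0 u₀).lt_or_eq with h | h
        · exact h
        · exfalso
          have hu₀W : u₀ ∈ W := (memW u₀).2 h.symm
          have : u₀ ∈ W ⊓ U := ⟨hu₀W, hu₀SU.1⟩
          rw [hU.inf_eq_bot] at this
          have h0' : u₀ = 0 := this
          have := hu₀SU.2
          rw [h0'] at this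
          simp at this
      refine ⟨C / m, by positivity, fun l hl => ?_⟩
      have hmem : l ∈ W ⊔ U := by rw [hU.sup_eq_top]; trivial
      obtain ⟨w, hw, u, hu, hsum⟩ := Submodule.mem_sup.1 hmem
      refine ⟨w, hw, ?_⟩
      have hlw : l - w = u := by rw [← hsum]; abel
      rw [hlw]
      by_cases hu0 : u = 0
      · rw [hu0]; simp; positivity
      · have hun : 0 < ‖u‖ := norm_pos_iff.2 hu0
        have hδu : Schreiber4.delta Λ C u ≤ C := by
          have h1 : Schreiber4.delta Λ C u
              ≤ Schreiber4.delta Λ C l + Schreiber4.delta Λ C (-w) := by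
            have he : u = l + (-w) := by rw [← hsum]; abel
            rw [he]
            exact Schreiber4.delta_add h0 hC hC0 l (-w)
          rw [Schreiber4.delta_even hsym] at h1
          have hw0 : Schreiber4.delta Λ C w = 0 := (memW w).1 hw
          have hl0 : Schreiber4.delta Λ C l ≤ C := Schreiber4.delta_le_C hC0 hl
          rw [hw0] at h1
          linarith
        have hmin : m ≤ Schreiber4.delta Λ C (‖u‖⁻¹ • u) := by
          refine isMinOn_iff.1 hu₀min _ ⟨U.smul_mem _ hu, ?_⟩
          simp only [Metric.mem_sphere, dist_zero_right]
          exact hsphere u hu0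
        have hsc : Schreiber4.delta Λ C (‖u‖⁻¹ • u) ≤ ‖u‖⁻¹ * Schreiber4.delta Λ C u :=
          Schreiber4.delta_smul_le h0 hC hC0 (by positivity) u
        rw [le_div_iff₀ hm0]
        have h2 : m * ‖u‖ ≤ Schreiber4.delta Λ C u := by
          have h3 : m ≤ ‖u‖⁻¹ * Schreiber4.delta Λ C u := le_trans hmin hsc
          rw [← mul_le_mul_iff_of_pos_right hun] at h3
          calc m * ‖u‖ ≤ (‖u‖⁻¹ * Schreiber4.delta Λ C u) * ‖u‖ := by
                have := hmin.trans hsc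
                nlinarith
            _ = Schreiber4.delta Λ C u := by field_simp
        nlinarith
  -- Part (A): W is within bounded distance of Λ
  obtain ⟨M, hM0, hsubl⟩ := Schreiber4.sublinear h0 hC hC0 (ε := 1/2) (by norm_num)
  set R₀ : ℝ := 1 + 3*ρ + 2*M + 2*C with hR₀
  have hA : ∀ x : V, x ∈ W → Schreiber4.dd Λ x ≤ R₀ := by
    intro x hxW
    set r := Schreiber4.dd Λ x with hr
    have hr0 : 0 ≤ r := Schreiber4.dd_nonneg x
    obtain ⟨l, hl, hlx⟩ := (Metric.infDist_lt_iff hne).1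
      (show Metric.infDist x Λ < r + 1 by
        have : Metric.infDist x Λ = r := rfl
        rw [this]; linarith)
    have hy : r ≤ Schreiber4.dd Λ (l - x) + C := by
      have h1 : Schreiber4.dd Λ (-x)
          ≤ Schreiber4.dd Λ (l - x) + Schreiber4.dd Λ (-l) + C := by
        have he : -x = (l - x) + (-l) := by abel
        rw [he]
        exact Schreiber4.dd_add h0 hC _ _
      rw [Schreiber4.dd_even hsym] at h1
      have hll : Schreiber4.dd Λ (-l) = 0 := by
        rw [Schreiber4.dd_even hsym]
        exact Schreiber4.dd_mem hl
      rw [hll] at h1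
      linarith
    obtain ⟨w', hw'W, hw'ρ⟩ := hB l hl
    have hδ'' : Schreiber4.delta Λ C (w' - x) = 0 := (memW _).1 (W.sub_mem hw'W hxW)
    have h2 : Schreiber4.dd Λ (l - x) ≤ Schreiber4.dd Λ (w' - x) + ρ := by
      have hlp := Schreiber4.dd_lip (Λ := Λ) (l - x) (w' - x)
      have he : (l - x) - (w' - x) = l - w' := by abel
      rw [he] at hlp
      linarith
    have h3 : Schreiber4.dd Λ (w' - x) ≤ (1/2) * ‖w' - x‖ + M := hsubl _ hδ''
    have h4 : ‖w' - x‖ ≤ (r + 1) + ρ := by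
      have he : w' - x = (l - x) - (l - w') := by abel
      rw [he]
      refine (norm_sub_le _ _).trans ?_
      have h5 : ‖l - x‖ < r + 1 := by
        rw [norm_sub_rev, ← dist_eq_norm]
        exact hlx
      linarith
    linarith
  -- assemble
  refine ⟨W, Metric.closedBall 0 ρ, Metric.closedBall 0 (R₀ + 1),
    isCompact_closedBall _ _, isCompact_closedBall _ _, ?_, ?_⟩
  · intro l hl
    obtain ⟨w, hw, hwρ⟩ := hB l hl
    refine Set.mem_add.2 ⟨w, hw, l - w, ?_, by abel⟩
    simpa [Metric.mem_closedBall, dist_zero_right] using hwρ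
  · intro x hxW
    have hdd := hA x hxW
    have hR0' : Metric.infDist x Λ < R₀ + 1 := by
      have : Metric.infDist x Λ = Schreiber4.dd Λ x := rfl
      rw [this]; linarith
    obtain ⟨l, hl, hlx⟩ := (Metric.infDist_lt_iff hne).1 hR0'
    refine Set.mem_add.2 ⟨l, hl, x - l, ?_, by abel⟩
    simp only [Metric.mem_closedBall, dist_zero_right]
    rw [dist_eq_norm] at hlx
    linarith
end

section
/- Let Λ ⊆ GLₙ(ℝ) be an approximate subgroup and suppose there exist lattices Γ₁ ⊆ Γ₂ in ℝⁿ (discrete cocompact subgroups) such that λ(Γ₁) ⊆ Γ₂ for all λ ∈ Λ. Then |det| takes finitely many values on Λ; more precisely, the set {|det(λ)| : λ ∈ Λ} is finite. -/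
open Pointwise

/-- Key lemma: there is `c > 0` such that every invertible matrix mapping `Γ₁` into `Γ₂`
has `|det| ∈ c • ℕ₊`. -/
theorem stmt9_key {n : ℕ} (Γ₁ Γ₂ : AddSubgroup (Fin n → ℝ)) (hsub : Γ₁ ≤ Γ₂)
    (hdisc₁ : DiscreteTopology Γ₁) (hdisc₂ : DiscreteTopology Γ₂)
    (hfull : Submodule.span ℝ (Γ₁ : Set (Fin n → ℝ)) = ⊤) :
    ∃ c : ℝ, 0 < c ∧ ∀ l : GL (Fin n) ℝ,
      (∀ v ∈ Γ₁, (l : Matrix (Fin n) (Fin n) ℝ).mulVec v ∈ Γ₂) →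
      ∃ k : ℕ, 0 < k ∧ |(l : Matrix (Fin n) (Fin n) ℝ).det| = c * k := by
  classical
  set L₁ : Submodule ℤ (Fin n → ℝ) := AddSubgroup.toIntSubmodule Γ₁ with hL₁
  set L₂ : Submodule ℤ (Fin n → ℝ) := AddSubgroup.toIntSubmodule Γ₂ with hL₂
  haveI : DiscreteTopology L₁ := hdisc₁
  haveI : DiscreteTopology L₂ := hdisc₂
  haveI : IsZLattice ℝ L₁ := ⟨by rw [hL₁]; exact hfull⟩
  haveI : IsZLattice ℝ L₂ := by
    refine ⟨top_le_iff.mp ?_⟩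
    rw [← hfull]
    exact Submodule.span_mono (fun x hx => hsub hx)
  haveI : Module.Finite ℤ L₁ := ZLattice.module_finite ℝ L₁
  haveI : Module.Free ℤ L₁ := ZLattice.module_free ℝ L₁
  haveI : Module.Finite ℤ L₂ := ZLattice.module_finite ℝ L₂
  haveI : Module.Free ℤ L₂ := ZLattice.module_free ℝ L₂
  let b₁ := Module.Free.chooseBasis ℤ L₁
  let b₂0 := Module.Free.chooseBasis ℤ L₂
  let e₁ := b₁.ofZLatticeBasis ℝ L₁
  let e₂0 := b₂0.ofZLatticeBasis ℝ L₂
  let σ := e₂0.indexEquiv e₁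
  let b₂ := b₂0.reindex σ
  let e₂ := b₂.ofZLatticeBasis ℝ L₂
  refine ⟨|e₁.det e₂|, abs_pos.mpr (e₁.isUnit_det e₂).ne_zero, fun l hl => ?_⟩
  set A : Matrix (Fin n) (Fin n) ℝ := (l : Matrix (Fin n) (Fin n) ℝ) with hA
  -- the linear map associated to `l`
  set f : (Fin n → ℝ) →ₗ[ℝ] (Fin n → ℝ) := A.mulVecLin with hf
  have hmapsto : ∀ x ∈ L₁, (f.restrictScalars ℤ) x ∈ L₂ := fun x hx => hl x hx
  set g : L₁ →ₗ[ℤ] L₂ := (f.restrictScalars ℤ).restrict hmapsto with hg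
  set M : Matrix _ _ ℤ := LinearMap.toMatrix b₁ b₂ g with hM
  have hcast : LinearMap.toMatrix e₁ e₂ f = M.map (Int.cast : ℤ → ℝ) := by
    ext i j
    rw [LinearMap.toMatrix_apply, Matrix.map_apply, hM, LinearMap.toMatrix_apply]
    have h1 : e₁ j = (b₁ j : Fin n → ℝ) := b₁.ofZLatticeBasis_apply ℝ L₁ j
    have h2 : f (b₁ j : Fin n → ℝ) = ((g (b₁ j) : L₂) : Fin n → ℝ) := by
      rw [hg]; rfl
    rw [h1, h2]
    exact b₂.ofZLatticeBasis_repr_apply ℝ L₂ (g (b₁ j)) i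
  have hdetf : A.det = e₁.det e₂ * ((M.det : ℤ) : ℝ) := by
    have h0 : LinearMap.det f = A.det := by
      rw [hf, ← Matrix.toLin'_apply', LinearMap.det_toLin']
    have h1 : LinearMap.det f = (LinearMap.toMatrix e₁ e₁ f).det :=
      (LinearMap.det_toMatrix e₁ f).symm
    have h2 : LinearMap.toMatrix e₁ e₁ f =
        LinearMap.toMatrix e₂ e₁ LinearMap.id * LinearMap.toMatrix e₁ e₂ f := by
      rw [← LinearMap.toMatrix_comp e₁ e₂ e₁ LinearMap.id f, LinearMap.id_comp]
    rw [← h0, h1, h2, Matrix.det_mul, LinearMap.toMatrix_id_eq_basis_toMatrix,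
      ← Module.Basis.det_apply, hcast]
    congr 1
    exact (RingHom.map_det (Int.castRingHom ℝ) M).symm
  refine ⟨M.det.natAbs, ?_, ?_⟩
  · rcases Nat.eq_zero_or_pos M.det.natAbs with h | h
    · exfalso
      have hd0 : M.det = 0 := Int.natAbs_eq_zero.mp h
      have : A.det = 0 := by rw [hdetf, hd0]; simp
      have hunit : IsUnit A.det := by
        refine IsUnit.of_mul_eq_one ((l⁻¹ : GL (Fin n) ℝ) : Matrix (Fin n) (Fin n) ℝ).det ?_
        rw [← Matrix.det_mul, ← Units.val_mul, mul_inv_cancel, Units.val_one, Matrix.det_one]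
      exact hunit.ne_zero this
    · exact h
  · rw [hdetf, abs_mul]
    congr 1
    rw [← Int.cast_abs, Int.abs_eq_natAbs, Int.cast_natCast]

theorem stmt9 {n : ℕ} (Λ : Set (GL (Fin n) ℝ)) (hΛ : IsApproxSubgroup Λ)
    (Γ₁ Γ₂ : AddSubgroup (Fin n → ℝ)) (hsub : Γ₁ ≤ Γ₂)
    (hdisc₁ : DiscreteTopology Γ₁) (hdisc₂ : DiscreteTopology Γ₂)
    (hfull : Submodule.span ℝ (Γ₁ : Set (Fin n → ℝ)) = ⊤)
    (hmap : ∀ l ∈ Λ, ∀ v ∈ Γ₁,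
      (l : Matrix (Fin n) (Fin n) ℝ).mulVec v ∈ Γ₂) :
    ((fun l : GL (Fin n) ℝ => |(l : Matrix (Fin n) (Fin n) ℝ).det|) '' Λ).Finite := by
  obtain ⟨c, hc, hkey⟩ := stmt9_key Γ₁ Γ₂ hsub hdisc₁ hdisc₂ hfull
  refine Set.Finite.subset (((Set.finite_Icc 1 ⌈c⁻¹ * c⁻¹⌉₊).image (fun k : ℕ => c * k))) ?_
  rintro y ⟨l, hl, rfl⟩
  obtain ⟨k, hk, hdet⟩ := hkey l (hmap l hl)
  have hlinv : l⁻¹ ∈ Λ := by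
    rw [← hΛ.2.1]
    exact Set.inv_mem_inv.mpr hl
  obtain ⟨k', hk', hdet'⟩ := hkey l⁻¹ (hmap l⁻¹ hlinv)
  refine ⟨k, ⟨hk, ?_⟩, hdet.symm⟩
  -- |det l| * |det l⁻¹| = 1
  have hmul : |(l : Matrix (Fin n) (Fin n) ℝ).det| *
      |((l⁻¹ : GL (Fin n) ℝ) : Matrix (Fin n) (Fin n) ℝ).det| = 1 := by
    rw [← abs_mul, ← Matrix.det_mul, ← Units.val_mul, mul_inv_cancel, Units.val_one,
      Matrix.det_one, abs_one]
  rw [hdet, hdet'] at hmul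
  -- c * k * (c * k') = 1, with k' ≥ 1, c > 0, so k ≤ c⁻¹ * c⁻¹
  have hk'1 : (1 : ℝ) ≤ k' := by exact_mod_cast hk'
  have h1 : (k : ℝ) * (c * c) ≤ 1 := by
    nlinarith [mul_nonneg (mul_nonneg (mul_nonneg (Nat.cast_nonneg k) hc.le) hc.le)
      (sub_nonneg.mpr hk'1)]
  have hkle : (k : ℝ) ≤ c⁻¹ * c⁻¹ := by
    have hcc : 0 < c * c := mul_pos hc hc
    have := (le_div_iff₀ hcc).mpr h1
    calc (k : ℝ) ≤ 1 / (c * c) := this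
    _ = c⁻¹ * c⁻¹ := by rw [one_div, mul_inv]
  exact Nat.cast_le.mp (le_trans hkle (Nat.le_ceil _))
end

section
/- Let Λ ⊆ GLₙ(ℝ) be an approximate subgroup with λ(ℤⁿ) ⊆ Γ₂ for all λ ∈ Λ, where ℤⁿ ⊆ Γ₂ ⊆ (1/m)ℤⁿ for some positive integer m. Then there exists an approximate subgroup Ξ ⊆ Λ⁴ commensurable to Λ with Ξ ⊆ GLₙ(ℤ) (i.e. every element of Ξ preserves ℤⁿ). -/
open Pointwise

def intLat (n : ℕ) : Set (Fin n → ℝ) := {v | ∀ i, ∃ k : ℤ, v i = (k : ℝ)}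

namespace Stmt11Aux

variable {n : ℕ}

/-- The action of `GL n ℝ` on vectors. -/
def act (g : GL (Fin n) ℝ) : (Fin n → ℝ) → (Fin n → ℝ) :=
  fun v => (g : Matrix (Fin n) (Fin n) ℝ).mulVec v

/-- The lattice `g · ℤⁿ`. -/
def LS (g : GL (Fin n) ℝ) : Set (Fin n → ℝ) := act g '' intLat n

lemma act_mul (g h : GL (Fin n) ℝ) (v : Fin n → ℝ) :
    act (g * h) v = act g (act h v) := by
  simp [act, Matrix.mulVec_mulVec]

lemma act_one (v : Fin n → ℝ) : act (1 : GL (Fin n) ℝ) v = v := by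
  simp [act]

lemma act_act_inv (g : GL (Fin n) ℝ) (v : Fin n → ℝ) : act g (act g⁻¹ v) = v := by
  rw [← act_mul, mul_inv_cancel, act_one]

lemma act_sub (g : GL (Fin n) ℝ) (a b : Fin n → ℝ) :
    act g (a - b) = act g a - act g b := by
  simp [act, Matrix.mulVec_sub]

lemma act_smul (g : GL (Fin n) ℝ) (c : ℝ) (v : Fin n → ℝ) :
    act g (c • v) = c • act g v := by
  simp [act, Matrix.mulVec_smul]

lemma LS_mul (g h : GL (Fin n) ℝ) : LS (g * h) = act g '' LS h := by
  simp only [LS, Set.image_image]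
  exact Set.image_congr fun x _ => act_mul g h x

lemma LS_one : LS (1 : GL (Fin n) ℝ) = intLat n := by
  simp only [LS]
  rw [Set.image_congr fun x _ => act_one x]
  exact Set.image_id _

lemma intLat_sub {a b : Fin n → ℝ} (ha : a ∈ intLat n) (hb : b ∈ intLat n) :
    a - b ∈ intLat n := by
  intro i
  obtain ⟨k, hk⟩ := ha i
  obtain ⟨l, hl⟩ := hb i
  exact ⟨k - l, by push_cast; simp [hk, hl]⟩

lemma intLat_add {a b : Fin n → ℝ} (ha : a ∈ intLat n) (hb : b ∈ intLat n) :
    a + b ∈ intLat n := by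
  intro i
  obtain ⟨k, hk⟩ := ha i
  obtain ⟨l, hl⟩ := hb i
  exact ⟨k + l, by push_cast; simp [hk, hl]⟩

lemma LS_sub {g : GL (Fin n) ℝ} {a b : Fin n → ℝ} (ha : a ∈ LS g) (hb : b ∈ LS g) :
    a - b ∈ LS g := by
  obtain ⟨x, hx, rfl⟩ := ha
  obtain ⟨y, hy, rfl⟩ := hb
  exact ⟨x - y, intLat_sub hx hy, act_sub g x y⟩

lemma LS_add {g : GL (Fin n) ℝ} {a b : Fin n → ℝ} (ha : a ∈ LS g) (hb : b ∈ LS g) :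
    a + b ∈ LS g := by
  have := LS_sub ha (LS_sub (LS_sub ha ha) hb)
  simpa using this

lemma LS_inv_eq {g : GL (Fin n) ℝ} (h : LS g = intLat n) : LS g⁻¹ = intLat n := by
  have h2 : LS (g⁻¹ * g) = act g⁻¹ '' LS g := LS_mul g⁻¹ g
  rw [inv_mul_cancel, LS_one, h] at h2
  exact h2.symm

end Stmt11Aux

open Stmt11Aux in
theorem stmt11 {n : ℕ} (m : ℕ) (hm : 0 < m)
    (Λ : Set (GL (Fin n) ℝ)) (hΛ : IsApproxSubgroup Λ)
    (Γ₂ : Set (Fin n → ℝ)) (h1 : intLat n ⊆ Γ₂)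
    (h2 : Γ₂ ⊆ {v | ∀ i, ∃ k : ℤ, v i = (k : ℝ) / m})
    (hmap : ∀ l ∈ Λ, ∀ v ∈ intLat n,
      (l : Matrix (Fin n) (Fin n) ℝ).mulVec v ∈ Γ₂) :
    ∃ Ξ : Set (GL (Fin n) ℝ), Ξ ⊆ Λ ^ 4 ∧ IsApproxSubgroup Ξ ∧
      SetCommensurable Ξ Λ ∧
      ∀ g ∈ Ξ, (fun v => (g : Matrix (Fin n) (Fin n) ℝ).mulVec v) '' intLat n
        = intLat n := by
  obtain ⟨hone, hsymm, F, hFfin, hFΛ⟩ := hΛ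
  have hmR : (m : ℝ) ≠ 0 := Nat.cast_ne_zero.2 hm.ne'
  -- membership of inverses
  have hinv : ∀ g ∈ Λ, g⁻¹ ∈ Λ := by
    intro g hg
    rw [← hsymm, Set.mem_inv]
    simpa using hg
  -- the set Q = (1/m) ℤⁿ
  set Q : Set (Fin n → ℝ) := {v | ∀ i, ∃ k : ℤ, v i = (k : ℝ) / m} with hQdef
  have hQ : ∀ g ∈ Λ, LS g ⊆ Q := by
    rintro g hg v ⟨x, hx, rfl⟩
    exact h2 (hmap g hg x hx)
  -- m ℤⁿ ⊆ LS g
  have hmZ : ∀ g ∈ Λ, ∀ u ∈ intLat n, (m : ℝ) • u ∈ LS g := by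
    intro g hg u hu
    have h1' : act g⁻¹ u ∈ Q := h2 (hmap g⁻¹ (hinv g hg) u hu)
    have h2' : (m : ℝ) • act g⁻¹ u ∈ intLat n := by
      intro i
      obtain ⟨k, hk⟩ := h1' i
      refine ⟨k, ?_⟩
      simp only [Pi.smul_apply, smul_eq_mul, hk]
      field_simp
    refine ⟨(m : ℝ) • act g⁻¹ u, h2', ?_⟩
    rw [act_smul, act_act_inv]
  -- coding map into a finite type
  set code : Set (Fin n → ℝ) → Set (Fin n → Fin (m * m)) :=
    fun S => {c | (fun i => ((c i : ℕ) : ℝ) / m) ∈ S} with hcodedef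
  -- injectivity of the coding on lattices of elements of Λ
  have hsubcode : ∀ g₁ ∈ Λ, ∀ g₂ ∈ Λ, code (LS g₁) = code (LS g₂) → LS g₁ ⊆ LS g₂ := by
    intro g₁ hg₁ g₂ hg₂ hcode v hv
    have hvQ : v ∈ Q := hQ g₁ hg₁ hv
    choose k hk using hvQ
    -- reduce v modulo m ℤⁿ
    set r : Fin n → ℤ := fun i => k i % (m * m : ℕ) with hrdef
    set q : Fin n → ℤ := fun i => k i / (m * m : ℕ) with hqdef
    have hmm : (0 : ℤ) < (m * m : ℕ) := by positivity
    have hr0 : ∀ i, 0 ≤ r i := fun i => Int.emod_nonneg _ hmm.ne'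
    have hrlt : ∀ i, r i < (m * m : ℕ) := fun i => Int.emod_lt_of_pos _ hmm
    set c : Fin n → Fin (m * m) := fun i => ⟨(r i).toNat, by
      have := hr0 i; have := hrlt i; omega⟩ with hcdef
    set w : Fin n → ℝ := fun i => ((c i : ℕ) : ℝ) / m with hwdef
    have hwc : ∀ i, w i = ((r i : ℤ) : ℝ) / m := by
      intro i
      simp only [hwdef, hcdef]
      congr 1
      exact_mod_cast congrArg (fun z : ℤ => (z : ℝ)) (Int.toNat_of_nonneg (hr0 i))
    have hu : ∀ i, v i - w i = (m : ℝ) * ((q i : ℤ) : ℝ) := by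
      intro i
      have hdiv : k i = (m * m : ℕ) * q i + r i := (Int.mul_ediv_add_emod _ _).symm
      rw [hk i, hwc i]
      rw [div_sub_div_same]
      have : ((k i : ℝ) - (r i : ℝ)) = (m : ℝ) * (m : ℝ) * (q i : ℝ) := by
        have : ((k i : ℤ) : ℝ) = ((m : ℝ) * (m : ℝ)) * ((q i : ℤ) : ℝ) + ((r i : ℤ) : ℝ) := by
          rw [show ((m : ℝ) * (m : ℝ)) = ((m * m : ℕ) : ℤ) by push_cast; ring]
          rw [← Int.cast_mul, ← Int.cast_add, ← hdiv]
        rw [this]; ring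
      rw [this]
      field_simp
    have hqZ : (fun i => ((q i : ℤ) : ℝ)) ∈ intLat n := fun i => ⟨q i, rfl⟩
    have hvw : v - w = (m : ℝ) • fun i => ((q i : ℤ) : ℝ) := by
      funext i
      simp [hu i]
    have hwin1 : w ∈ LS g₁ := by
      have hmu : (m : ℝ) • (fun i => ((q i : ℤ) : ℝ)) ∈ LS g₁ := hmZ g₁ hg₁ _ hqZ
      have := LS_sub hv hmu
      rw [← hvw] at this
      simpa using this
    have hcmem : c ∈ code (LS g₁) := by
      show (fun i => ((c i : ℕ) : ℝ) / m) ∈ LS g₁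
      exact hwin1
    rw [hcode] at hcmem
    have hwin2 : w ∈ LS g₂ := hcmem
    have hmu2 : (m : ℝ) • (fun i => ((q i : ℤ) : ℝ)) ∈ LS g₂ := hmZ g₂ hg₂ _ hqZ
    have := LS_add hwin2 hmu2
    rw [← hvw] at this
    simpa using this
  -- set of lattices is finite
  have hLSfin : (LS '' Λ).Finite := by
    have hinj : Set.InjOn code (LS '' Λ) := by
      rintro _ ⟨g₁, hg₁, rfl⟩ _ ⟨g₂, hg₂, rfl⟩ h
      exact Set.Subset.antisymm (hsubcode g₁ hg₁ g₂ hg₂ h)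
        (hsubcode g₂ hg₂ g₁ hg₁ h.symm)
    exact Set.Finite.of_finite_image (Set.toFinite _) hinj
  -- choose representatives
  have hcov : ∀ s ∈ LS '' Λ, ∃ g, g ∈ Λ ∧ LS g = s := by
    rintro s ⟨g, hg, rfl⟩; exact ⟨g, hg, rfl⟩
  classical
  set rep : Set (Fin n → ℝ) → GL (Fin n) ℝ :=
    fun s => if h : s ∈ LS '' Λ then (hcov s h).choose else 1 with hrepdef
  set T : Set (GL (Fin n) ℝ) := rep '' (LS '' Λ) with hTdef
  have hTfin : T.Finite := hLSfin.image _
  have hTsub : T ⊆ Λ := by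
    rintro _ ⟨s, hs, rfl⟩
    simp only [hrepdef, dif_pos hs]
    exact (hcov s hs).choose_spec.1
  have hTrep : ∀ g ∈ Λ, ∃ t ∈ T, LS t = LS g := by
    intro g hg
    have hs : LS g ∈ LS '' Λ := ⟨g, hg, rfl⟩
    refine ⟨rep (LS g), ⟨LS g, hs, rfl⟩, ?_⟩
    simp only [hrepdef, dif_pos hs]
    exact (hcov _ hs).choose_spec.2
  -- define Ξ
  set Ξ : Set (GL (Fin n) ℝ) := (Λ * Λ) ∩ {g | LS g = intLat n} with hΞdef
  have hΞstab : ∀ g ∈ Ξ, LS g = intLat n := fun g hg => hg.2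
  have hΞΛ2 : Ξ ⊆ Λ * Λ := Set.inter_subset_left
  -- Λ ⊆ T * Ξ
  have hΛTΞ : Λ ⊆ T * Ξ := by
    intro g hg
    obtain ⟨t, htT, htL⟩ := hTrep g hg
    have htΛ : t ∈ Λ := hTsub htT
    have hstab : LS (t⁻¹ * g) = intLat n := by
      rw [LS_mul, ← htL, ← LS_mul, inv_mul_cancel, LS_one]
    have hmem : t⁻¹ * g ∈ Ξ := ⟨Set.mul_mem_mul (hinv t htΛ) hg, hstab⟩
    have : g = t * (t⁻¹ * g) := by group
    rw [this]
    exact Set.mul_mem_mul htT hmem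
  refine ⟨Ξ, ?_, ⟨?_, ?_, ?_⟩, ?_, ?_⟩
  · -- Ξ ⊆ Λ ^ 4
    intro g hg
    obtain ⟨a, ha, b, hb, rfl⟩ := hΞΛ2 hg
    show a * b ∈ Λ ^ 4
    have : a * b = a * b * 1 * 1 := by group
    rw [this, show Λ ^ 4 = Λ * Λ * Λ * Λ by rw [pow_succ, pow_succ, pow_succ, pow_one]]
    exact Set.mul_mem_mul (Set.mul_mem_mul (Set.mul_mem_mul ha hb) hone) hone
  · -- 1 ∈ Ξ
    exact ⟨by simpa using Set.mul_mem_mul hone hone, LS_one⟩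
  · -- Ξ⁻¹ = Ξ
    ext g
    simp only [hΞdef, Set.mem_inv, Set.mem_inter_iff, Set.mem_setOf_eq]
    constructor
    · rintro ⟨hg2, hgs⟩
      constructor
      · obtain ⟨a, ha, b, hb, hab⟩ := hg2
        have : g = b⁻¹ * a⁻¹ := by
          have := congrArg (·⁻¹) hab
          simpa [mul_inv_rev] using this.symm
        rw [this]
        exact Set.mul_mem_mul (hinv b hb) (hinv a ha)
      · rw [show g = (g⁻¹)⁻¹ by group]
        exact LS_inv_eq hgs
    · rintro ⟨hg2, hgs⟩
      constructor
      · obtain ⟨a, ha, b, hb, hab⟩ := hg2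
        rw [← hab, mul_inv_rev]
        exact Set.mul_mem_mul (hinv b hb) (hinv a ha)
      · exact LS_inv_eq hgs
  · -- Ξ * Ξ ⊆ F' * Ξ
    refine ⟨F * F * F * T, ((hFfin.mul hFfin).mul hFfin).mul hTfin, ?_⟩
    have step3 : Λ * Λ * Λ ⊆ F * F * Λ := by
      calc Λ * Λ * Λ ⊆ (F * Λ) * Λ := Set.mul_subset_mul_right hFΛ
        _ = F * (Λ * Λ) := by rw [mul_assoc]
        _ ⊆ F * (F * Λ) := Set.mul_subset_mul_left hFΛ
        _ = F * F * Λ := by rw [mul_assoc]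
    calc Ξ * Ξ ⊆ (Λ * Λ) * (Λ * Λ) := Set.mul_subset_mul hΞΛ2 hΞΛ2
      _ = Λ * Λ * Λ * Λ := by rw [mul_assoc, mul_assoc, mul_assoc]
      _ ⊆ (F * F * Λ) * Λ := Set.mul_subset_mul_right step3
      _ = F * F * (Λ * Λ) := by rw [mul_assoc]
      _ ⊆ F * F * (F * Λ) := Set.mul_subset_mul_left hFΛ
      _ ⊆ F * F * (F * (T * Ξ)) := Set.mul_subset_mul_left (Set.mul_subset_mul_left hΛTΞ)
      _ = F * F * F * T * Ξ := by rw [mul_assoc, mul_assoc, mul_assoc, mul_assoc]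
  · -- commensurability
    refine ⟨F ∪ T, hFfin.union hTfin, ?_, ?_⟩
    · calc Ξ ⊆ Λ * Λ := hΞΛ2
        _ ⊆ F * Λ := hFΛ
        _ ⊆ (F ∪ T) * Λ := Set.mul_subset_mul_right Set.subset_union_left
    · calc Λ ⊆ T * Ξ := hΛTΞ
        _ ⊆ (F ∪ T) * Ξ := Set.mul_subset_mul_right Set.subset_union_right
  · -- stabilizes intLat
    intro g hg
    exact hΞstab g hg
end

section
/- Let G be a locally compact group and Λ ⊆ G a uniform approximate lattice admitting a good model f : Λ^∞ → H into a locally compact group H. Then the map γ ↦ (γ, f(γ)) embeds Λ^∞ as a discrete subgroup of G × closure(f(Λ^∞)). (Discreteness part: there is a neighbourhood of the identity in G × H meeting the image only in the identity.) -/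
open Pointwise

theorem stmt12 {G H : Type*}
    [Group G] [TopologicalSpace G] [IsTopologicalGroup G] [LocallyCompactSpace G]
    [Group H] [TopologicalSpace H] [IsTopologicalGroup H] [LocallyCompactSpace H]
    (Λ : Set G) (hΛ : IsApproxSubgroup Λ) (hdisc : DiscreteTopology Λ)
    (hcocpt : ∃ K : Set G, IsCompact K ∧ Set.univ ⊆ K * Λ)
    (f : Subgroup.closure Λ →* H)
    (hrel : IsCompact (closure (f '' {γ : Subgroup.closure Λ | (γ : G) ∈ Λ})))
    (hV : ∃ V ∈ nhds (1 : H), ∀ γ : Subgroup.closure Λ, f γ ∈ V → (γ : G) ∈ Λ) :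
    Function.Injective (fun γ : Subgroup.closure Λ => ((γ : G), f γ)) ∧
    ∃ U ∈ nhds ((1, 1) : G × H),
      ∀ γ : Subgroup.closure Λ, ((γ : G), f γ) ∈ U → γ = 1 := by
  constructor
  · intro a b h
    exact Subtype.val_injective (congrArg Prod.fst h)
  · obtain ⟨V, hVn, hVΛ⟩ := hV
    have h1 : (1 : G) ∈ Λ := hΛ.1
    have hopen : IsOpen ({⟨1, h1⟩} : Set Λ) := isOpen_discrete _
    obtain ⟨W, hW, hWe⟩ := isOpen_induced_iff.mp hopen
    have h1W : (1 : G) ∈ W := by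
      have : (⟨1, h1⟩ : Λ) ∈ Subtype.val ⁻¹' W := hWe ▸ rfl
      exact this
    refine ⟨W ×ˢ V, prod_mem_nhds (hW.mem_nhds h1W) hVn, ?_⟩
    intro γ hγ
    have hγΛ : (γ : G) ∈ Λ := hVΛ γ hγ.2
    have : (⟨(γ : G), hγΛ⟩ : Λ) ∈ ({⟨1, h1⟩} : Set Λ) := by
      rw [← hWe]; exact hγ.1
    have hval : (γ : G) = 1 := congrArg Subtype.val (Set.mem_singleton_iff.mp this)
    exact Subtype.val_injective hval
end

section
/- Let G be a group, Λ ⊆ G a symmetric subset containing the identity, and f : Λ^∞ → H a good model for Λ (f(Λ) relatively compact in the locally compact group H and f⁻¹(V) ⊆ Λ for some identity neighbourhood V). Then Λ is an approximate subgroup of G. -/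
open Pointwise

theorem stmt13 {G H : Type*} [Group G]
    [Group H] [TopologicalSpace H] [IsTopologicalGroup H] [LocallyCompactSpace H]
    (Λ : Set G) (h1 : (1 : G) ∈ Λ) (hsym : Λ⁻¹ = Λ)
    (f : Subgroup.closure Λ →* H)
    (hrel : IsCompact (closure (f '' {γ : Subgroup.closure Λ | (γ : G) ∈ Λ})))
    (hV : ∃ V ∈ nhds (1 : H), ∀ γ : Subgroup.closure Λ, f γ ∈ V → (γ : G) ∈ Λ) :
    IsApproxSubgroup Λ := by
  obtain ⟨V, hVmem, hVsub⟩ := hV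
  -- find open symmetric W with W⁻¹ * W ⊆ V
  obtain ⟨U, Uopen, hU1, hUU⟩ := exists_open_nhds_one_mul_subset hVmem
  set W : Set H := U ∩ U⁻¹ with hW
  have Wopen : IsOpen W := Uopen.inter (Uopen.preimage continuous_inv)
  have hW1 : (1 : H) ∈ W := ⟨hU1, by simpa using hU1⟩
  have hWinv : ∀ x ∈ W, x⁻¹ ∈ U := fun x hx => hx.2
  have hWsub : ∀ x ∈ W, ∀ y ∈ W, x⁻¹ * y ∈ V := fun x hx y hy =>
    hUU (Set.mul_mem_mul (hWinv x hx) hy.1)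
  -- the compact set containing f '' (Λ * Λ)
  set S : Set H := closure (f '' {γ : Subgroup.closure Λ | (γ : G) ∈ Λ}) with hS
  have hK : IsCompact (S * S) := hrel.mul hrel
  obtain ⟨t, ht⟩ := compact_covered_by_mul_left_translates hK
    ⟨1, by rwa [Wopen.interior_eq]⟩
  -- choice function
  classical
  let P : H → Prop := fun g => ∃ γ : Subgroup.closure Λ, g * f γ ∈ W
  let c : H → G := fun g => if h : P g then ((h.choose : Subgroup.closure Λ) : G) else 1
  refine ⟨h1, hsym, c '' ↑t, (t.finite_toSet.image c), ?_⟩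
  rintro x ⟨a, ha, b, hb, rfl⟩
  have haG : a ∈ Subgroup.closure Λ := Subgroup.subset_closure ha
  have hbG : b ∈ Subgroup.closure Λ := Subgroup.subset_closure hb
  set α : Subgroup.closure Λ := ⟨a, haG⟩
  set β : Subgroup.closure Λ := ⟨b, hbG⟩
  have hfαβ : f (α * β) ∈ S * S := by
    rw [map_mul]
    exact Set.mul_mem_mul (subset_closure ⟨α, ha, rfl⟩) (subset_closure ⟨β, hb, rfl⟩)
  obtain ⟨g, hgt, hg⟩ : ∃ g ∈ t, g * f (α * β) ∈ W := by
    have := ht hfαβ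
    simpa using this
  have hPg : P g := ⟨α * β, hg⟩
  have hγW : g * f hPg.choose ∈ W := hPg.choose_spec
  set γ : Subgroup.closure Λ := hPg.choose
  have key : f (γ⁻¹ * (α * β)) ∈ V := by
    have : f (γ⁻¹ * (α * β)) = (g * f γ)⁻¹ * (g * f (α * β)) := by
      rw [map_mul, map_inv]; group
    rw [this]
    exact hWsub _ hγW _ hg
  have hmem : ((γ⁻¹ * (α * β) : Subgroup.closure Λ) : G) ∈ Λ := hVsub _ key
  refine ⟨(γ : G), ⟨g, hgt, by simp [c, hPg]; rfl⟩, ((γ⁻¹ * (α * β) : Subgroup.closure Λ) : G), hmem, ?_⟩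
  push_cast
  group
  rfl
end

section
/- Let N be a connected, simply connected nilpotent Lie group and Γ ⊆ N a finitely generated subgroup. For g in the commensurator of Γ (i.e. gΓg⁻¹ is commensurable to Γ as groups), the ℚ-span of log(Γ) in the Lie algebra of N satisfies ℚ·log(gΓg⁻¹) = ℚ·log(Γ), i.e. Ad-type conjugation by g preserves the rational Lie algebra ℚ log(Γ). -/
lemma span_le_of_relindex_ne_zero {N : Type*} [Group N] {L : Type*} [AddCommGroup L]
    [Module ℚ L] (log : N → L)
    (hpow : ∀ (x : N) (n : ℕ), log (x ^ n) = (n : ℚ) • log x)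
    {H K : Subgroup N} (h : H.relIndex K ≠ 0) :
    Submodule.span ℚ (log '' (K : Set N)) ≤ Submodule.span ℚ (log '' (H : Set N)) := by
  rw [Submodule.span_le]
  rintro _ ⟨x, hx, rfl⟩
  obtain ⟨n, hn0, -, hmem⟩ := Subgroup.exists_pow_mem_of_relIndex_ne_zero h hx
  have hlog : log (x ^ n) = (n : ℚ) • log x := hpow x n
  have hxn : log (x ^ n) ∈ Submodule.span ℚ (log '' (H : Set N)) :=
    Submodule.subset_span ⟨x ^ n, hmem.1, rfl⟩
  have : log x = ((n : ℚ)⁻¹) • log (x ^ n) := by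
    rw [hlog, smul_smul, inv_mul_cancel₀ (by exact_mod_cast hn0.ne'), one_smul]
  rw [SetLike.mem_coe, this]
  exact Submodule.smul_mem _ _ hxn

theorem stmt15 {N : Type*} [Group N] {L : Type*} [AddCommGroup L] [Module ℚ L]
    (log : N → L) (hbij : Function.Bijective log)
    (hpow : ∀ (x : N) (n : ℕ), log (x ^ n) = (n : ℚ) • log x)
    (Γ : Subgroup N) (hfg : Γ.FG) (g : N)
    (hcomm : Subgroup.Commensurable (Γ.map (MulAut.conj g).toMonoidHom) Γ) :
    Submodule.span ℚ (log '' (Γ.map (MulAut.conj g).toMonoidHom : Set N)) =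
      Submodule.span ℚ (log '' (Γ : Set N)) := by
  exact le_antisymm (span_le_of_relindex_ne_zero log hpow hcomm.2)
    (span_le_of_relindex_ne_zero log hpow hcomm.1)
end

section
/- Let G be a group, H ⊴ Λ^∞ a normal subgroup of the group generated by an approximate subgroup Λ, and p : Λ^∞ → Λ^∞/H the quotient map. Suppose the set of commutators {[p(λ₁), p(λ₂)] : λ₁, λ₂ ∈ Λ} is finite and p(Λ^∞) is generated by a finite subset of p(Λ). Then p(Λ) is commensurable (within Λ^∞/H) to p(Λ²) ∩ Z(Λ^∞/H), where Z denotes the center. -/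
open Pointwise
open scoped commutatorElement

theorem stmt16 {G : Type*} [Group G] (Λ : Set G) (hΛ : IsApproxSubgroup Λ)
    (H : Subgroup ↥(Subgroup.closure Λ)) [H.Normal]
    (hcomm : {z : ↥(Subgroup.closure Λ) ⧸ H |
        ∃ a ∈ (QuotientGroup.mk' H) '' {x : ↥(Subgroup.closure Λ) | (x : G) ∈ Λ},
        ∃ b ∈ (QuotientGroup.mk' H) '' {x : ↥(Subgroup.closure Λ) | (x : G) ∈ Λ},
        z = a * b * a⁻¹ * b⁻¹}.Finite)
    (hgen : ∃ S : Set (↥(Subgroup.closure Λ) ⧸ H),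
        S ⊆ (QuotientGroup.mk' H) '' {x : ↥(Subgroup.closure Λ) | (x : G) ∈ Λ} ∧
        S.Finite ∧ Subgroup.closure S = ⊤) :
    SetCommensurable
      ((QuotientGroup.mk' H) '' {x : ↥(Subgroup.closure Λ) | (x : G) ∈ Λ})
      (((QuotientGroup.mk' H) '' {x : ↥(Subgroup.closure Λ) | (x : G) ∈ Λ * Λ}) ∩
        (Subgroup.center (↥(Subgroup.closure Λ) ⧸ H) : Set _)) := by
  classical
  obtain ⟨h1, hinv, F, hFfin, hFΛ⟩ := hΛ
  obtain ⟨S, hSA, hSfin, hSgen⟩ := hgen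
  set p := QuotientGroup.mk' H with hp
  set A := p '' {x : ↥(Subgroup.closure Λ) | (x : G) ∈ Λ} with hAdef
  -- A is symmetric
  have hAinv : ∀ γ ∈ A, γ⁻¹ ∈ A := by
    rintro γ ⟨x, hx, rfl⟩
    refine ⟨x⁻¹, ?_, map_inv p x⟩
    show ((x : G))⁻¹ ∈ Λ
    have h2 : ((x : G))⁻¹ ∈ Λ⁻¹ := Set.inv_mem_inv.2 hx
    rwa [hinv] at h2
  -- center lemma
  have hcen : ∀ g a : ↥(Subgroup.closure Λ) ⧸ H, (∀ s : ↥S, ⁅s.1, g⁆ = ⁅s.1, a⁆) →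
      g⁻¹ * a ∈ Subgroup.center _ := by
    intro g a hga
    rw [Subgroup.mem_center_iff]
    intro q
    have hq : q ∈ Subgroup.closure S := hSgen ▸ Subgroup.mem_top q
    induction hq using Subgroup.closure_induction with
    | mem s hs =>
      have h := hga ⟨s, hs⟩
      simp only [commutatorElement_def] at h
      have h1 : g * s⁻¹ * g⁻¹ = a * s⁻¹ * a⁻¹ := by
        apply mul_left_cancel (a := s)
        simpa [mul_assoc] using h
      have h2 : g * s * g⁻¹ = a * s * a⁻¹ := by
        have := congrArg (·⁻¹) h1
        simpa [mul_assoc] using this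
      calc s * (g⁻¹ * a) = g⁻¹ * (g * s * g⁻¹) * a := by group
        _ = g⁻¹ * (a * s * a⁻¹) * a := by rw [h2]
        _ = (g⁻¹ * a) * s := by group
    | one => simp
    | mul x y hx hy ihx ihy =>
      rw [mul_assoc, ihy, ← mul_assoc, ihx, mul_assoc]
    | inv x hx ihx =>
      have := congrArg (fun w => x⁻¹ * w * x⁻¹) ihx
      simp only [mul_assoc] at this ⊢
      simpa [← mul_assoc] using this.symm
  -- the commutator map
  set θ := fun (γ : ↥(Subgroup.closure Λ) ⧸ H) (s : ↥S) => ⁅s.1, γ⁆ with hθdef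
  haveI : Finite ↥S := hSfin.to_subtype
  have hθfin : (θ '' A).Finite := by
    refine Set.Finite.subset (Set.Finite.pi (fun _ : ↥S => hcomm)) ?_
    rintro f ⟨γ, hγ, rfl⟩
    intro s _
    exact ⟨s.1, hSA s.2, γ, hγ, commutatorElement_def _ _⟩
  let r := fun (v : ↥S → ↥(Subgroup.closure Λ) ⧸ H) => if h : v ∈ θ '' A then h.choose else 1
  have hr : ∀ v ∈ θ '' A, r v ∈ A ∧ θ (r v) = v := by
    intro v hv
    simp only [r, dif_pos hv]
    exact ⟨hv.choose_spec.1, hv.choose_spec.2⟩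
  set F₁ := r '' (θ '' A) with hF₁def
  have hF₁fin : F₁.Finite := hθfin.image r
  -- translate set for second inclusion
  set T := p '' {y : ↥(Subgroup.closure Λ) | (y : G) ∈ F} with hTdef
  have hTfin : T.Finite := by
    apply Set.Finite.image
    have : {y : ↥(Subgroup.closure Λ) | (y : G) ∈ F} = (Subtype.val) ⁻¹' F := rfl
    rw [this]
    exact hFfin.preimage (Subtype.val_injective.injOn)
  refine ⟨F₁ ∪ T, hF₁fin.union hTfin, ?_, ?_⟩
  · -- A ⊆ (F₁ ∪ T) * B
    intro a ha
    have haθ : θ a ∈ θ '' A := ⟨a, ha, rfl⟩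
    obtain ⟨hgA, hgθ⟩ := hr (θ a) haθ
    set g := r (θ a) with hgdef
    have hzB : g⁻¹ * a ∈ (p '' {x : ↥(Subgroup.closure Λ) | (x : G) ∈ Λ * Λ}) ∩
        (Subgroup.center (↥(Subgroup.closure Λ) ⧸ H) : Set _) := by
      constructor
      · obtain ⟨x, hx, hxe⟩ := hAinv g hgA
        obtain ⟨y, hy, hye⟩ := ha
        exact ⟨x * y, Set.mul_mem_mul hx hy, by rw [map_mul, hxe, hye]⟩
      · exact hcen g a (fun s => congrFun hgθ s)
    exact ⟨g, Or.inl ⟨θ a, haθ, rfl⟩, g⁻¹ * a, hzB, by group⟩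
  · -- B ⊆ (F₁ ∪ T) * A
    rintro q ⟨⟨x, hx, rfl⟩, -⟩
    obtain ⟨f, hf, l, hl, hfl⟩ := hFΛ hx
    have hlK : l ∈ Subgroup.closure Λ := Subgroup.subset_closure hl
    set y : ↥(Subgroup.closure Λ) := x * (⟨l, hlK⟩ : ↥(Subgroup.closure Λ))⁻¹ with hydef
    have hyF : (y : G) ∈ F := by
      have : (y : G) = (x : G) * l⁻¹ := rfl
      have hfl' : f * l = (x : G) := hfl
      rw [this, ← hfl', mul_inv_cancel_right]
      exact hf
    refine ⟨p y, Or.inr ⟨y, hyF, rfl⟩, p ⟨l, hlK⟩, ⟨⟨l, hlK⟩, hl, rfl⟩, ?_⟩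
    show p y * p ⟨l, hlK⟩ = p x
    rw [← map_mul]
    congr 1
    rw [hydef, inv_mul_cancel_right]
end

section
/- Let G and H be groups, Λ ⊆ G an approximate subgroup, φ : G → H a group homomorphism, and suppose φ(Λ) is finite. Then Λ² ∩ ker(φ) is an approximate subgroup commensurable to Λ. -/
open Pointwise

/-- Coset-representative lemma: if `X ⊆ S * Λ` with `S` finite, then the part of `X`
lying in `ker φ` is covered by finitely many translates of `Λ⁻¹ * Λ ∩ ker φ`. -/
lemma cover_ker {G H : Type*} [Group G] [Group H] (Λ : Set G) (φ : G →* H)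
    (S : Set G) (hS : S.Finite) :
    ∃ E : Set G, E.Finite ∧
      (S * Λ) ∩ (φ.ker : Set G) ⊆ E * ((Λ⁻¹ * Λ) ∩ (φ.ker : Set G)) := by
  classical
  have key : ∀ f : G, ∃ e : G, (∃ a ∈ Λ, f * a ∈ (φ.ker : Set G)) →
      (∃ a ∈ Λ, e = f * a) ∧ e ∈ (φ.ker : Set G) := by
    intro f
    by_cases h : ∃ a ∈ Λ, f * a ∈ (φ.ker : Set G)
    · obtain ⟨a, ha, hfa⟩ := h
      exact ⟨f * a, fun _ => ⟨⟨a, ha, rfl⟩, hfa⟩⟩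
    · exact ⟨1, fun h' => absurd h' h⟩
  choose c hc using key
  refine ⟨c '' S, hS.image c, ?_⟩
  rintro x ⟨hx, hxk⟩
  rw [Set.mem_mul] at hx
  obtain ⟨f, hf, a, ha, rfl⟩ := hx
  obtain ⟨⟨b, hb, hcf⟩, hck⟩ := hc f ⟨a, ha, hxk⟩
  refine ⟨c f, ⟨f, hf, rfl⟩, (c f)⁻¹ * (f * a), ⟨?_, ?_⟩, by group⟩
  · rw [hcf, mul_inv_rev, mul_assoc, inv_mul_cancel_left]
    exact Set.mul_mem_mul (Set.inv_mem_inv.mpr hb) ha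
  · exact mul_mem (inv_mem hck) hxk

theorem stmt18 {G H : Type*} [Group G] [Group H] (Λ : Set G)
    (hΛ : IsApproxSubgroup Λ) (φ : G →* H) (hfin : (φ '' Λ).Finite) :
    IsApproxSubgroup (Λ ^ 2 ∩ (φ.ker : Set G)) ∧
    SetCommensurable (Λ ^ 2 ∩ (φ.ker : Set G)) Λ := by
  classical
  obtain ⟨h1, hinv, F, hF, hFΛ⟩ := hΛ
  have hsq : Λ ^ 2 = Λ * Λ := sq Λ
  -- Λ⁴ ⊆ F*F*F*Λ
  have h3 : Λ * Λ * Λ ⊆ F * F * Λ := by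
    calc Λ * Λ * Λ ⊆ (F * Λ) * Λ := Set.mul_subset_mul_right hFΛ
      _ = F * (Λ * Λ) := mul_assoc _ _ _
      _ ⊆ F * (F * Λ) := Set.mul_subset_mul_left hFΛ
      _ = F * F * Λ := (mul_assoc _ _ _).symm
  have h4 : Λ * Λ * (Λ * Λ) ⊆ (F * F * F) * Λ := by
    calc Λ * Λ * (Λ * Λ) = Λ * Λ * Λ * Λ := by rw [mul_assoc, mul_assoc, mul_assoc]
      _ ⊆ (F * F * Λ) * Λ := Set.mul_subset_mul_right h3
      _ = F * F * (Λ * Λ) := mul_assoc _ _ _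
      _ ⊆ F * F * (F * Λ) := Set.mul_subset_mul_left hFΛ
      _ = (F * F * F) * Λ := by rw [mul_assoc, mul_assoc, mul_assoc]
  obtain ⟨E, hE, hEcov⟩ := cover_ker Λ φ (F * F * F) ((hF.mul hF).mul hF)
  rw [hinv] at hEcov
  -- reps for each value of φ on Λ
  have keyT : ∀ h : H, ∃ t : G, h ∈ φ '' Λ → t ∈ Λ ∧ φ t = h := by
    intro h
    by_cases hh : h ∈ φ '' Λ
    · obtain ⟨t, ht, rfl⟩ := hh
      exact ⟨t, fun _ => ⟨ht, rfl⟩⟩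
    · exact ⟨1, fun h' => absurd h' hh⟩
  choose c hc using keyT
  have hTcov : Λ ⊆ (c '' (φ '' Λ)) * (Λ ^ 2 ∩ (φ.ker : Set G)) := by
    intro x hx
    obtain ⟨ht, hφt⟩ := hc (φ x) ⟨x, hx, rfl⟩
    refine ⟨c (φ x), ⟨φ x, ⟨x, hx, rfl⟩, rfl⟩, (c (φ x))⁻¹ * x, ⟨?_, ?_⟩, by group⟩
    · rw [hsq]
      exact Set.mul_mem_mul (hinv ▸ Set.inv_mem_inv.mpr ht) hx
    · simp [MonoidHom.mem_ker, hφt]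
  constructor
  · refine ⟨⟨by rw [hsq]; exact ⟨1, h1, 1, h1, mul_one 1⟩, one_mem _⟩, ?_, E, hE, ?_⟩
    · rw [Set.inter_inv, inv_coe_set, hsq, mul_inv_rev, hinv, ← hsq]
    · intro x hx
      rw [Set.mem_mul] at hx
      obtain ⟨a, ⟨ha1, hak⟩, b, ⟨hb1, hbk⟩, rfl⟩ := hx
      rw [hsq] at ha1 hb1
      have := hEcov ⟨h4 (Set.mul_mem_mul ha1 hb1), mul_mem hak hbk⟩
      rwa [← hsq] at this
  · refine ⟨F ∪ (c '' (φ '' Λ)), hF.union (hfin.image c), ?_, ?_⟩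
    · intro x hx
      have : x ∈ F * Λ := hFΛ (by rw [← hsq]; exact hx.1)
      exact Set.mul_subset_mul_right Set.subset_union_left this
    · intro x hx
      exact Set.mul_subset_mul_right Set.subset_union_right (hTcov hx)
end

section
/- Let G be a topological group, Λ ⊆ G an approximate subgroup, and H ≤ G a closed connected subgroup compactly commensurable to Λ (Λ ⊆ KH and H ⊆ KΛ for some compact symmetric K). Then there is a compact set K' ⊆ G such that the subgroup Λ^∞ generated by Λ is generated by Λ² ∩ K'. In particular, if Λ is discrete, Λ^∞ is finitely generated. -/
open Pointwise Topology

theorem stmt19 {G : Type*} [Group G] [TopologicalSpace G] [IsTopologicalGroup G]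
    [LocallyCompactSpace G]
    (Λ : Set G) (hΛ : IsApproxSubgroup Λ) (H : Subgroup G)
    (hclosed : IsClosed (H : Set G)) (hconn : IsConnected (H : Set G))
    (K : Set G) (hK : IsCompact K) (hKsym : K⁻¹ = K)
    (h1 : Λ ⊆ K * (H : Set G)) (h2 : (H : Set G) ⊆ K * Λ) :
    ∃ K' : Set G, IsCompact K' ∧
      Subgroup.closure (Λ * Λ ∩ K') = Subgroup.closure Λ := by
  obtain ⟨hone, hsym, -⟩ := hΛ
  obtain ⟨V, hVc, hVn⟩ := exists_compact_mem_nhds (1 : G)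
  -- symmetric neighbourhood of 1
  set W : Set G := V ∩ V⁻¹ with hWdef
  have hVin : V⁻¹ ∈ 𝓝 (1 : G) := by
    have : Continuous (fun x : G => x⁻¹) := continuous_inv
    have := this.continuousAt (x := (1 : G)) |>.preimage_mem_nhds (by simpa using hVn)
    simpa [Set.inv_preimage] using this
  have hWn : W ∈ 𝓝 (1 : G) := Filter.inter_mem hVn hVin
  have hWV : W ⊆ V := Set.inter_subset_left
  -- the compact set K'
  refine ⟨K * V * K ∪ K, ((hK.mul hVc).mul hK).union hK, le_antisymm ?_ ?_⟩
  · -- easy inclusion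
    rw [Subgroup.closure_le]
    rintro x ⟨hx, -⟩
    obtain ⟨a, ha, b, hb, rfl⟩ := hx
    exact mul_mem (Subgroup.subset_closure ha) (Subgroup.subset_closure hb)
  · rw [Subgroup.closure_le]
    intro lam hlam
    -- set-up in the subgroup H
    have : ConnectedSpace H := Subtype.connectedSpace hconn
    set U : Set H := (Subtype.val) ⁻¹' W with hUdef
    have hUn : U ∈ 𝓝 (1 : H) :=
      continuous_subtype_val.continuousAt.preimage_mem_nhds (by simpa using hWn)
    have hUsym : U⁻¹ = U := by
      ext x
      simp only [hUdef, Set.mem_inv, Set.mem_preimage, hWdef, Set.mem_inter_iff,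
        Set.mem_inv]
      push_cast
      constructor
      · rintro ⟨h1', h2'⟩; exact ⟨by simpa using h2', by simpa using h1'⟩
      · rintro ⟨h1', h2'⟩; exact ⟨by simpa using h2', by simpa using h1'⟩
    have htop : Subgroup.closure U = ⊤ := by
      have hopen : IsOpen ((Subgroup.closure U : Subgroup H) : Set H) :=
        Subgroup.isOpen_of_mem_nhds _
          (Filter.mem_of_superset hUn Subgroup.subset_closure)
      have hclopen : IsClopen ((Subgroup.closure U : Subgroup H) : Set H) :=
        ⟨(Subgroup.closure U).isClosed_of_isOpen hopen, hopen⟩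
      rw [← Subgroup.coe_eq_univ]
      exact hclopen.eq_univ ⟨1, Subgroup.one_mem _⟩
    -- main chain argument
    have main : ∀ (l : List H), (∀ y ∈ l, y ∈ U) → ∀ μ ∈ Λ,
        μ * (↑l.prod : G)⁻¹ ∈ K → μ ∈ Subgroup.closure (Λ * Λ ∩ (K * V * K ∪ K)) := by
      intro l
      induction l with
      | nil =>
        intro _ μ hμ hk
        apply Subgroup.subset_closure
        refine ⟨?_, Or.inr ?_⟩
        · have := Set.mul_mem_mul hμ hone
          simpa using this
        · simpa using hk
      | cons v t ih =>
        intro hmem μ hμ hk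
        have hprod : ((v :: t).prod : G) = (↑v : G) * ↑t.prod := by
          rw [List.prod_cons]; push_cast; ring_nf
        have ht' : (↑t.prod : G) ∈ (H : Set G) := t.prod.2
        obtain ⟨k', hk', μ', hμ', heq⟩ := h2 ht'
        have h1' : μ' * (↑t.prod : G)⁻¹ ∈ K := by
          have he : μ' * (↑t.prod : G)⁻¹ = k'⁻¹ := by
            rw [← heq]; group
          rw [he, ← hKsym]
          exact Set.inv_mem_inv.mpr hk'
        have hIH := ih (fun y hy => hmem y (List.mem_cons_of_mem _ hy)) μ' hμ' h1'
        have hv : (↑v : G) ∈ V := hWV (hmem v (List.mem_cons_self))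
        have hkK : (↑t.prod : G) * μ'⁻¹ ∈ K := by
          have : (↑t.prod : G) * μ'⁻¹ = k' := by rw [← heq]; group
          rwa [this]
        have hmul : μ * μ'⁻¹ ∈ Λ * Λ ∩ (K * V * K ∪ K) := by
          constructor
          · refine Set.mul_mem_mul hμ ?_
            rw [← hsym]; exact Set.inv_mem_inv.mpr hμ'
          · left
            have hrw : μ * μ'⁻¹ =
                (μ * ((v :: t).prod : G)⁻¹) * (↑v : G) * ((↑t.prod : G) * μ'⁻¹) := by
              rw [hprod]; group
            rw [hrw]
            exact Set.mul_mem_mul (Set.mul_mem_mul hk hv) hkK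
        have : μ = (μ * μ'⁻¹) * μ' := by group
        rw [this]
        exact mul_mem (Subgroup.subset_closure hmul) hIH
    -- apply to λ
    obtain ⟨k, hkK, h, hh, heq⟩ := h1 hlam
    have hhH : (⟨h, hh⟩ : H) ∈ Subgroup.closure U := htop ▸ Subgroup.mem_top _
    have hmem' : (⟨h, hh⟩ : H) ∈ Submonoid.closure U := by
      have h3 : (⟨h, hh⟩ : H) ∈ (Subgroup.closure U).toSubmonoid := hhH
      rw [Subgroup.closure_toSubmonoid, hUsym, Set.union_self] at h3
      exact h3
    obtain ⟨l, hl, hlprod⟩ := Submonoid.exists_list_of_mem_closure hmem'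
    refine main l (fun y hy => (hl y hy)) lam hlam ?_
    rw [hlprod]
    have : lam * (h : G)⁻¹ = k := by rw [← heq]; group
    simpa [this] using hkK
end
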